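/- arXiv:1905.10041 — 10 statements merged into one kernel-verified Lean document; each statement's English description precedes it below -/
import Mathlib

section
/- Let σ > 0 and C₁ = 8 / log(1 + σ⁻²). Suppose ‖φ(x)‖² ≤ 1 for all x ∈ X (i.e. k(x,x) ≤ 1), let f(x) = ⟨w, φ(x)⟩ for some w ∈ H, and let x* ∈ X satisfy f(x*) ≥ f(x) for all x ∈ X. Suppose points x₁, …, x_T ∈ X are chosen so that for every t ∈ {1,…,T} the Gram matrix K_{t−1} of x₁,…,x_{t−1} is invertible and x_t maximizes the acquisition function, i.e. m_{t−1}(x_t) + ‖w‖·σ_{t−1}(x_t) ≥ m_{t−1}(x) + ‖w‖·σ_{t−1}(x) for all x ∈ X. If γ ∈ ℝ satisfies (1/2)·log det(I_T + σ⁻² K_T) ≤ γ, where K_T is the Gram matrix of x₁,…,x_T, then the cumulative regret satisfies Σ_{t=1}^T (f(x*) − f(x_t)) ≤ ‖w‖·√(T·C₁·γ), and consequently the simple regret satisfies f(x*) − max_{1≤t≤T} f(x_t) ≤ ‖w‖·√(C₁·γ/T). -/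
open scoped RealInnerProductSpace
open Matrix

noncomputable section

variable {X : Type*} {H : Type*} [NormedAddCommGroup H] [InnerProductSpace ℝ H]

/-- The kernel associated with the feature map `φ`: `k(x,y) = ⟪φ(x), φ(y)⟫`. -/
def ker (φ : X → H) (x y : X) : ℝ := ⟪φ x, φ y⟫

/-- Gram matrix of the points `xs`. -/
def gram (φ : X → H) {t : ℕ} (xs : Fin t → X) : Matrix (Fin t) (Fin t) ℝ :=
  Matrix.of fun i j => ker φ (xs i) (xs j)

/-- The vector `k_t(a) = (k(a,x₁),…,k(a,x_t))ᵀ`. -/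
def kvec (φ : X → H) {t : ℕ} (xs : Fin t → X) (a : X) : Fin t → ℝ :=
  fun i => ker φ a (xs i)

/-- The mean prediction `m_t(a) = k_t(a)ᵀ K_t⁻¹ (f(x₁),…,f(x_t))ᵀ`. -/
def meanFn (φ : X → H) (f : X → ℝ) {t : ℕ} (xs : Fin t → X) (a : X) : ℝ :=
  kvec φ xs a ⬝ᵥ ((gram φ xs)⁻¹ *ᵥ (fun i => f (xs i)))

/-- The variance `σ_t²(a) = k(a,a) − k_t(a)ᵀ K_t⁻¹ k_t(a)`. -/
def varFn (φ : X → H) {t : ℕ} (xs : Fin t → X) (a : X) : ℝ :=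
  ker φ a a - kvec φ xs a ⬝ᵥ ((gram φ xs)⁻¹ *ᵥ kvec φ xs a)

/-- `σ_t(a) = √(σ_t²(a))`. -/
def sigmaFn (φ : X → H) {t : ℕ} (xs : Fin t → X) (a : X) : ℝ := Real.sqrt (varFn φ xs a)

/-- The first `t` points of the sequence `x`: `x₁,…,x_{t-1}` (0-indexed: indices `< t`). -/
def prevPts {T : ℕ} (x : Fin T → X) (t : Fin T) : Fin t.val → X :=
  fun j => x ⟨j.val, j.isLt.trans t.isLt⟩

lemma gram_symm (φ : X → H) {t : ℕ} (xs : Fin t → X) : (gram φ xs)ᵀ = gram φ xs := by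
  ext i j; simp [_root_.gram, ker, transpose_apply, real_inner_comm]

lemma gram_inv_symm (φ : X → H) {t : ℕ} (xs : Fin t → X) : ((gram φ xs)⁻¹)ᵀ = (gram φ xs)⁻¹ := by
  rw [Matrix.transpose_nonsing_inv, gram_symm]

lemma dot_gram_mulVec (φ : X → H) {t : ℕ} (xs : Fin t → X) (v : Fin t → ℝ) :
    v ⬝ᵥ (gram φ xs *ᵥ v) = ‖∑ i, v i • φ (xs i)‖^2 := by
  rw [← real_inner_self_eq_norm_sq, sum_inner]
  simp only [inner_sum, real_inner_smul_left, real_inner_smul_right]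
  simp only [dotProduct, mulVec, _root_.gram, ker, Matrix.of_apply, Finset.mul_sum]
  rw [Finset.sum_comm]
  congr 1; ext i; congr 1; ext j; rw [real_inner_comm]; ring

lemma gram_psd (φ : X → H) {t : ℕ} (xs : Fin t → X) (v : Fin t → ℝ) :
    0 ≤ v ⬝ᵥ (gram φ xs *ᵥ v) := by
  rw [dot_gram_mulVec]; positivity

lemma gram_inv_psd (φ : X → H) {t : ℕ} {xs : Fin t → X} (hu : IsUnit (gram φ xs).det)
    (v : Fin t → ℝ) : 0 ≤ v ⬝ᵥ ((gram φ xs)⁻¹ *ᵥ v) := by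
  set u := (gram φ xs)⁻¹ *ᵥ v with hu'
  have hv : gram φ xs *ᵥ u = v := by
    rw [hu', Matrix.mulVec_mulVec, Matrix.mul_nonsing_inv _ hu, Matrix.one_mulVec]
  calc (0:ℝ) ≤ u ⬝ᵥ (gram φ xs *ᵥ u) := gram_psd φ xs u
    _ = v ⬝ᵥ u := by rw [hv, dotProduct_comm]

lemma varFn_eq_norm (φ : X → H) {t : ℕ} {xs : Fin t → X} (hu : IsUnit (gram φ xs).det) (a : X) :
    varFn φ xs a = ‖φ a - ∑ i, ((gram φ xs)⁻¹ *ᵥ kvec φ xs a) i • φ (xs i)‖^2 := by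
  set c := (gram φ xs)⁻¹ *ᵥ kvec φ xs a with hc
  have hGc : gram φ xs *ᵥ c = kvec φ xs a := by
    rw [hc, Matrix.mulVec_mulVec, Matrix.mul_nonsing_inv _ hu, Matrix.one_mulVec]
  have h1 : ⟪φ a, ∑ i, c i • φ (xs i)⟫ = kvec φ xs a ⬝ᵥ c := by
    rw [inner_sum]
    simp [real_inner_smul_right, dotProduct, kvec, ker, mul_comm]
  have h2 : ‖∑ i, c i • φ (xs i)‖^2 = c ⬝ᵥ kvec φ xs a := by
    rw [← dot_gram_mulVec, hGc]
  rw [norm_sub_sq_real, h1, h2, ← real_inner_self_eq_norm_sq]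
  simp only [varFn, ker, ← hc, dotProduct_comm c (kvec φ xs a)]
  ring

lemma varFn_nonneg (φ : X → H) {t : ℕ} {xs : Fin t → X} (hu : IsUnit (gram φ xs).det) (a : X) :
    0 ≤ varFn φ xs a := by rw [varFn_eq_norm φ hu a]; positivity

lemma sqrt_varFn (φ : X → H) {t : ℕ} {xs : Fin t → X} (hu : IsUnit (gram φ xs).det) (a : X) :
    sigmaFn φ xs a = ‖φ a - ∑ i, ((gram φ xs)⁻¹ *ᵥ kvec φ xs a) i • φ (xs i)‖ := by
  rw [sigmaFn, varFn_eq_norm φ hu a, Real.sqrt_sq (norm_nonneg _)]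

lemma f_sub_mean (φ : X → H) (w : H) (f : X → ℝ) (hf : ∀ a, f a = ⟪w, φ a⟫)
    {t : ℕ} {xs : Fin t → X} (hu : IsUnit (gram φ xs).det) (a : X) :
    f a - meanFn φ f xs a = ⟪w, φ a - ∑ i, ((gram φ xs)⁻¹ *ᵥ kvec φ xs a) i • φ (xs i)⟫ := by
  set c := (gram φ xs)⁻¹ *ᵥ kvec φ xs a with hc
  have h3 : kvec φ xs a ᵥ* (gram φ xs)⁻¹ = c := by
    rw [hc]; conv_lhs => rw [← gram_inv_symm φ xs, Matrix.vecMul_transpose]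
  have hm : meanFn φ f xs a = ∑ i, c i * f (xs i) := by
    rw [meanFn, Matrix.dotProduct_mulVec, h3]; rfl
  rw [inner_sub_right, inner_sum, hm, hf a]
  simp [real_inner_smul_right, hf]

lemma abs_f_sub_mean (φ : X → H) (w : H) (f : X → ℝ) (hf : ∀ a, f a = ⟪w, φ a⟫)
    {t : ℕ} {xs : Fin t → X} (hu : IsUnit (gram φ xs).det) (a : X) :
    |f a - meanFn φ f xs a| ≤ ‖w‖ * sigmaFn φ xs a := by
  rw [f_sub_mean φ w f hf hu a, sqrt_varFn φ hu a]
  exact abs_real_inner_le_norm _ _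

lemma ker_comm (φ : X → H) (x y : X) : ker φ x y = ker φ y x := real_inner_comm _ _

def nmat (φ : X → H) (c : ℝ) {t : ℕ} (xs : Fin t → X) : Matrix (Fin t) (Fin t) ℝ :=
  1 + c • gram φ xs

def nvar (φ : X → H) (c : ℝ) {t : ℕ} (xs : Fin t → X) (a : X) : ℝ :=
  ker φ a a - c * (kvec φ xs a ⬝ᵥ ((nmat φ c xs)⁻¹ *ᵥ kvec φ xs a))

lemma nmat_symm (φ : X → H) (c : ℝ) {t : ℕ} (xs : Fin t → X) : (nmat φ c xs)ᵀ = nmat φ c xs := by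
  rw [nmat, transpose_add, transpose_smul, transpose_one, gram_symm]

lemma nmat_posdef (φ : X → H) {c : ℝ} (hc : 0 < c) {t : ℕ} (xs : Fin t → X) :
    (nmat φ c xs).PosDef := by
  refine Matrix.PosDef.of_dotProduct_mulVec_pos ?_ ?_
  · rw [Matrix.IsHermitian, conjTranspose, nmat_symm]
    ext i j; simp
  · intro v hv
    have h1 : star v = v := by simp
    rw [h1, nmat, Matrix.add_mulVec, Matrix.one_mulVec, Matrix.smul_mulVec,
      dotProduct_add, dotProduct_smul]
    have h2 : 0 < v ⬝ᵥ v := by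
      rcases Function.ne_iff.mp hv with ⟨i, hi⟩
      have : ∀ j, 0 ≤ v j * v j := fun j => mul_self_nonneg _
      calc (0:ℝ) < v i * v i := mul_self_pos.mpr hi
        _ ≤ ∑ j, v j * v j := Finset.single_le_sum (fun j _ => this j) (Finset.mem_univ i)
        _ = v ⬝ᵥ v := rfl
    have h3 : 0 ≤ c * (v ⬝ᵥ (gram φ xs *ᵥ v)) := mul_nonneg hc.le (gram_psd φ xs v)
    simpa using add_pos_of_pos_of_nonneg h2 h3

lemma nmat_det_isUnit (φ : X → H) {c : ℝ} (hc : 0 < c) {t : ℕ} (xs : Fin t → X) :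
    IsUnit (nmat φ c xs).det :=
  isUnit_iff_ne_zero.mpr (nmat_posdef φ hc xs).det_pos.ne'

lemma gram_dot_symm (φ : X → H) {t : ℕ} (xs : Fin t → X) (u v : Fin t → ℝ) :
    (gram φ xs *ᵥ u) ⬝ᵥ v = u ⬝ᵥ (gram φ xs *ᵥ v) := by
  rw [dotProduct_comm, Matrix.dotProduct_mulVec, ← Matrix.mulVec_transpose, gram_symm,
    dotProduct_comm]

lemma varFn_le_nvar (φ : X → H) {c : ℝ} (hc : 0 < c) {t : ℕ} {xs : Fin t → X}
    (hu : IsUnit (gram φ xs).det) (a : X) :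
    varFn φ xs a ≤ nvar φ c xs a := by
  rw [varFn, nvar]
  have key : c * (kvec φ xs a ⬝ᵥ ((nmat φ c xs)⁻¹ *ᵥ kvec φ xs a))
      ≤ kvec φ xs a ⬝ᵥ ((gram φ xs)⁻¹ *ᵥ kvec φ xs a) := by
    have hNu : IsUnit (nmat φ c xs).det := nmat_det_isUnit φ hc xs
    set k := kvec φ xs a with hk0
    set v := (nmat φ c xs)⁻¹ *ᵥ k with hv
    have hk : k = v + c • (gram φ xs *ᵥ v) := by
      have h1 : nmat φ c xs *ᵥ v = k := by
        rw [hv, Matrix.mulVec_mulVec, Matrix.mul_nonsing_inv _ hNu, Matrix.one_mulVec]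
      rw [← h1, nmat, Matrix.add_mulVec, Matrix.one_mulVec, Matrix.smul_mulVec]
    clear_value v
    clear_value k
    have hGv : gram φ xs *ᵥ ((gram φ xs)⁻¹ *ᵥ v) = v := by
      rw [Matrix.mulVec_mulVec, Matrix.mul_nonsing_inv _ hu, Matrix.one_mulVec]
    have hGv2 : (gram φ xs)⁻¹ *ᵥ (gram φ xs *ᵥ v) = v := by
      rw [Matrix.mulVec_mulVec, Matrix.nonsing_inv_mul _ hu, Matrix.one_mulVec]
    have e1 : k ⬝ᵥ ((gram φ xs)⁻¹ *ᵥ k)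
        = v ⬝ᵥ ((gram φ xs)⁻¹ *ᵥ v) + c * (v ⬝ᵥ v) + c * (k ⬝ᵥ v) := by
      rw [hk]
      simp only [Matrix.mulVec_add, Matrix.mulVec_smul, hGv2, add_dotProduct,
        smul_dotProduct, dotProduct_add, dotProduct_smul, smul_eq_mul,
        gram_dot_symm, hGv]
    have h2 : 0 ≤ v ⬝ᵥ ((gram φ xs)⁻¹ *ᵥ v) := gram_inv_psd φ hu v
    have h3 : 0 ≤ v ⬝ᵥ v := Finset.sum_nonneg fun j _ => mul_self_nonneg _
    have h4 : 0 ≤ c * (v ⬝ᵥ v) := mul_nonneg hc.le h3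
    linarith [e1]
  linarith


lemma nmat_det_succ (φ : X → H) {c : ℝ} (hc : 0 < c) {n : ℕ} (xs : Fin (n+1) → X) :
    (nmat φ c xs).det = (nmat φ c (xs ∘ Fin.castSucc)).det
      * (1 + c * nvar φ c (xs ∘ Fin.castSucc) (xs (Fin.last n))) := by
  set ys := xs ∘ Fin.castSucc with hys
  set a := xs (Fin.last n) with ha
  have hNu : IsUnit (nmat φ c ys).det := nmat_det_isUnit φ hc ys
  haveI : Invertible (nmat φ c ys) := (nmat φ c ys).invertibleOfIsUnitDet hNu
  have hnat : ∀ i : Fin 1, Fin.natAdd n i = Fin.last n := by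
    intro i; ext; simp [Fin.last]
  have hne : ∀ i : Fin n, (i : ℕ) ≠ n := fun i => i.isLt.ne
  have hre : (nmat φ c xs).submatrix finSumFinEquiv finSumFinEquiv
      = Matrix.fromBlocks (nmat φ c ys)
          (Matrix.of fun i (_ : Fin 1) => c * ker φ (ys i) a)
          (Matrix.of fun (_ : Fin 1) j => c * ker φ a (ys j))
          (Matrix.of fun _ _ => 1 + c * ker φ a a) := by
    ext i j
    rcases i with i | i <;> rcases j with j | j <;>
      simp [nmat, _root_.gram, ker, Matrix.submatrix, Matrix.one_apply, Matrix.add_apply,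
        Fin.castSucc_inj, finSumFinEquiv, Fin.ext_iff, hnat, hne, (fun i => (hne i).symm : ∀ i : Fin n, n ≠ (i:ℕ))] <;>
      first | exact Or.inl rfl | rfl
  have hdet := Matrix.det_submatrix_equiv_self finSumFinEquiv (nmat φ c xs)
  rw [← hdet, hre, Matrix.det_fromBlocks₁₁]
  congr 1
  rw [Matrix.det_fin_one]
  rw [invOf_eq_nonsing_inv]
  simp only [Matrix.sub_apply, Matrix.mul_apply, Matrix.of_apply, nvar, dotProduct,
    Matrix.mulVec, Finset.mul_sum, Finset.sum_mul, kvec]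
  have hfac : ∀ (M : Matrix (Fin n) (Fin n) ℝ),
      ∑ y : Fin n, ∑ x : Fin n, c * ker φ a (ys y) * M y x * (c * ker φ (ys x) a)
        = c * ∑ y : Fin n, ∑ x : Fin n, c * (ker φ a (ys y) * (M y x * ker φ a (ys x))) := by
    intro M
    rw [Finset.mul_sum]
    refine Finset.sum_congr rfl fun i _ => ?_
    rw [Finset.mul_sum]
    refine Finset.sum_congr rfl fun j _ => ?_
    rw [ker_comm φ (ys j) a]
    ring
  rw [Finset.sum_comm, hfac]
  ring

lemma nmat_det_prod (φ : X → H) {c : ℝ} (hc : 0 < c) : ∀ {n : ℕ} (xs : Fin n → X),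
    (nmat φ c xs).det
      = ∏ i : Fin n, (1 + c * nvar φ c (fun j : Fin i.val => xs ⟨j.val, j.isLt.trans i.isLt⟩) (xs i)) := by
  intro n
  induction n with
  | zero =>
    intro xs
    simp [nmat, Matrix.det_fin_zero]
  | succ n ih =>
    intro xs
    rw [nmat_det_succ φ hc xs, ih (xs ∘ Fin.castSucc), Fin.prod_univ_castSucc]
    congr 1

lemma mul_log_le_log_one_add {c s : ℝ} (hc : 0 < c) (h0 : 0 ≤ s) (h1 : s ≤ 1) :
    s * Real.log (1 + c) ≤ Real.log (1 + c * s) := by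
  have h2 : (1 + c) ^ s ≤ 1 + s * c :=
    rpow_one_add_le_one_add_mul_self (by linarith) h0 h1
  have h3 : (0:ℝ) < 1 + c := by linarith
  have h4 : (0:ℝ) < (1 + c) ^ s := Real.rpow_pos_of_pos h3 s
  calc s * Real.log (1 + c) = Real.log ((1 + c) ^ s) := (Real.log_rpow h3 s).symm
    _ ≤ Real.log (1 + s * c) := by
        rw [Real.log_le_log_iff h4 (by nlinarith)]
        exact h2
    _ = Real.log (1 + c * s) := by rw [mul_comm]

lemma varFn_le_ker (φ : X → H) {t : ℕ} {xs : Fin t → X} (hu : IsUnit (gram φ xs).det) (a : X) :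
    varFn φ xs a ≤ ker φ a a := by
  have := gram_inv_psd φ hu (kvec φ xs a)
  rw [varFn]; linarith

/-- Theorem 1 (noise-free sequential regret bounds). -/
theorem statement_0 [Nonempty X]
    (φ : X → H) (w : H) (f : X → ℝ) (hf : ∀ a, f a = ⟪w, φ a⟫)
    (hk : ∀ a : X, ker φ a a ≤ 1)
    (σ : ℝ) (hσ : 0 < σ)
    (T : ℕ) (hT : 0 < T)
    (xstar : X) (hstar : ∀ a : X, f a ≤ f xstar)
    (x : Fin T → X)
    (hinv : ∀ t : Fin T, IsUnit (gram φ (prevPts x t)).det)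
    (hacq : ∀ t : Fin T, ∀ a : X,
      meanFn φ f (prevPts x t) a + ‖w‖ * sigmaFn φ (prevPts x t) a ≤
        meanFn φ f (prevPts x t) (x t) + ‖w‖ * sigmaFn φ (prevPts x t) (x t))
    (γ : ℝ)
    (hγ : (1/2) * Real.log ((1 + (σ^2)⁻¹ • gram φ x).det) ≤ γ) :
    (∑ t : Fin T, (f xstar - f (x t))) ≤
        ‖w‖ * Real.sqrt ((T : ℝ) * (8 / Real.log (1 + (σ^2)⁻¹)) * γ) ∧
    f xstar - (Finset.univ.sup' (Finset.univ_nonempty_iff.mpr (Fin.pos_iff_nonempty.mp hT))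
        fun t => f (x t)) ≤
      ‖w‖ * Real.sqrt ((8 / Real.log (1 + (σ^2)⁻¹)) * γ / (T : ℝ)) := by
  have hc : (0:ℝ) < (σ^2)⁻¹ := by positivity
  set c := (σ^2)⁻¹ with hc'
  set L := Real.log (1 + c) with hL'
  have hL : 0 < L := Real.log_pos (by linarith)
  set s : Fin T → ℝ := fun t => varFn φ (prevPts x t) (x t) with hs'
  set sg : Fin T → ℝ := fun t => sigmaFn φ (prevPts x t) (x t) with hsg'
  have hs0 : ∀ t, 0 ≤ s t := fun t => varFn_nonneg φ (hinv t) _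
  have hs1 : ∀ t, s t ≤ 1 := fun t => le_trans (varFn_le_ker φ (hinv t) _) (hk _)
  have hsn : ∀ t, s t ≤ nvar φ c (prevPts x t) (x t) := fun t => varFn_le_nvar φ hc (hinv t) _
  have hdetp : (nmat φ c x).det = ∏ t : Fin T, (1 + c * nvar φ c (prevPts x t) (x t)) :=
    nmat_det_prod φ hc x
  have hfac_pos : ∀ t : Fin T, 0 < 1 + c * nvar φ c (prevPts x t) (x t) := by
    intro t; nlinarith [hsn t, hs0 t]
  have hlogdet : Real.log ((nmat φ c x).det)
      = ∑ t, Real.log (1 + c * nvar φ c (prevPts x t) (x t)) := by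
    rw [hdetp, Real.log_prod fun t _ => (hfac_pos t).ne']
  have hnm : nmat φ c x = 1 + c • gram φ x := rfl
  have hld2 : Real.log ((nmat φ c x).det) ≤ 2 * γ := by rw [hnm]; linarith
  have hkey : ∀ t, s t * L ≤ Real.log (1 + c * nvar φ c (prevPts x t) (x t)) := by
    intro t
    calc s t * L ≤ Real.log (1 + c * s t) := mul_log_le_log_one_add hc (hs0 t) (hs1 t)
      _ ≤ Real.log (1 + c * nvar φ c (prevPts x t) (x t)) := by
          rw [Real.log_le_log_iff (by nlinarith [hs0 t]) (hfac_pos t)]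
          nlinarith [hsn t]
  have hsum_s : (∑ t, s t) * L ≤ 2 * γ := by
    rw [Finset.sum_mul]
    calc ∑ t, s t * L ≤ ∑ t, Real.log (1 + c * nvar φ c (prevPts x t) (x t)) :=
          Finset.sum_le_sum fun t _ => hkey t
      _ ≤ 2 * γ := by rw [← hlogdet]; exact hld2
  have hγ0 : 0 ≤ γ := by
    have h1 : 0 ≤ (∑ t, s t) * L := mul_nonneg (Finset.sum_nonneg fun t _ => hs0 t) hL.le
    linarith
  have hSsum : ∑ t, s t ≤ 2 * γ / L := by rw [le_div_iff₀ hL]; exact hsum_s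
  have hreg : ∀ t : Fin T, f xstar - f (x t) ≤ 2 * (‖w‖ * sg t) := by
    intro t
    have h1 := abs_f_sub_mean φ w f hf (hinv t) xstar
    have h2 := abs_f_sub_mean φ w f hf (hinv t) (x t)
    have h3 := hacq t xstar
    rw [abs_le] at h1 h2
    have e1 := h1.2
    have e2 := h2.1
    simp only [hsg']
    linarith
  have hsg0 : ∀ t, 0 ≤ sg t := fun t => Real.sqrt_nonneg _
  have hsgsq : ∀ t, sg t ^ 2 = s t := fun t => Real.sq_sqrt (hs0 t)
  have hCS : (∑ t, sg t)^2 ≤ (T:ℝ) * ∑ t, s t := by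
    have h := sq_sum_le_card_mul_sum_sq (s := (Finset.univ : Finset (Fin T))) (f := sg)
    simp only [Finset.card_univ, Fintype.card_fin] at h
    calc (∑ t, sg t)^2 ≤ (T:ℝ) * ∑ t, sg t ^ 2 := by exact_mod_cast h
      _ = (T:ℝ) * ∑ t, s t := by
          congr 1; exact Finset.sum_congr rfl fun t _ => hsgsq t
  have hTT : (0:ℝ) < T := by exact_mod_cast hT
  have hsum_sg : ∑ t, sg t ≤ Real.sqrt ((T:ℝ) * (2 * γ / L)) := by
    rw [← Real.sqrt_sq (Finset.sum_nonneg fun t _ => hsg0 t)]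
    apply Real.sqrt_le_sqrt
    calc (∑ t, sg t)^2 ≤ (T:ℝ) * ∑ t, s t := hCS
      _ ≤ (T:ℝ) * (2 * γ / L) := mul_le_mul_of_nonneg_left hSsum hTT.le
  have hrad : 2 * Real.sqrt ((T:ℝ) * (2 * γ / L)) = Real.sqrt ((T:ℝ) * (8 / L) * γ) := by
    have h4 : Real.sqrt 4 = 2 := by
      rw [show (4:ℝ) = 2^2 by norm_num, Real.sqrt_sq (by norm_num)]
    rw [show (T:ℝ) * (8 / L) * γ = 4 * ((T:ℝ) * (2 * γ / L)) by ring,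
      Real.sqrt_mul (by norm_num : (0:ℝ) ≤ 4), h4]
  have hcum : ∑ t, (f xstar - f (x t)) ≤ ‖w‖ * Real.sqrt ((T:ℝ) * (8 / L) * γ) := by
    calc ∑ t, (f xstar - f (x t)) ≤ ∑ t, 2 * (‖w‖ * sg t) :=
          Finset.sum_le_sum fun t _ => hreg t
      _ = 2 * ‖w‖ * ∑ t, sg t := by rw [Finset.mul_sum]; exact Finset.sum_congr rfl fun t _ => by ring
      _ ≤ 2 * ‖w‖ * Real.sqrt ((T:ℝ) * (2 * γ / L)) :=
          mul_le_mul_of_nonneg_left hsum_sg (by positivity)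
      _ = ‖w‖ * (2 * Real.sqrt ((T:ℝ) * (2 * γ / L))) := by ring
      _ = ‖w‖ * Real.sqrt ((T:ℝ) * (8 / L) * γ) := by rw [hrad]
  refine ⟨hcum, ?_⟩
  set M := Finset.univ.sup' (Finset.univ_nonempty_iff.mpr (Fin.pos_iff_nonempty.mp hT))
      (fun t => f (x t)) with hM'
  have hMt : ∀ t : Fin T, f (x t) ≤ M := fun t =>
    Finset.le_sup' (fun t => f (x t)) (Finset.mem_univ t)
  have hTsum : (T:ℝ) * (f xstar - M) ≤ ∑ t, (f xstar - f (x t)) := by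
    calc (T:ℝ) * (f xstar - M) = ∑ _t : Fin T, (f xstar - M) := by
          rw [Finset.sum_const, Finset.card_univ, Fintype.card_fin, nsmul_eq_mul]
      _ ≤ ∑ t, (f xstar - f (x t)) := Finset.sum_le_sum fun t _ => by linarith [hMt t]
  have hz0 : 0 ≤ (T:ℝ) * (8 / L) * γ := by positivity
  have hdiv : Real.sqrt ((8 / L) * γ / (T:ℝ)) = Real.sqrt ((T:ℝ) * (8 / L) * γ) / (T:ℝ) := by
    rw [show (8 / L) * γ / (T:ℝ) = ((T:ℝ) * (8 / L) * γ) / (T:ℝ)^2 by field_simp,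
      Real.sqrt_div hz0, Real.sqrt_sq hTT.le]
  rw [hdiv]
  have : f xstar - M ≤ ‖w‖ * Real.sqrt ((T:ℝ) * (8 / L) * γ) / (T:ℝ) := by
    rw [le_div_iff₀ hTT]
    calc (f xstar - M) * (T:ℝ) = (T:ℝ) * (f xstar - M) := by ring
      _ ≤ ∑ t, (f xstar - f (x t)) := hTsum
      _ ≤ ‖w‖ * Real.sqrt ((T:ℝ) * (8 / L) * γ) := hcum
  calc f xstar - M ≤ ‖w‖ * Real.sqrt ((T:ℝ) * (8 / L) * γ) / (T:ℝ) := this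
    _ = ‖w‖ * (Real.sqrt ((T:ℝ) * (8 / L) * γ) / (T:ℝ)) := by ring
end
end

section
/- Let 𝒳 ⊆ ℝ^d, let Φ : [0,∞) → ℝ be nonincreasing with Φ(0) ≤ 1, and suppose the kernel is shift-invariant: ⟨φ(x), φ(y)⟩ = Φ(‖x − y‖) for all x, y ∈ 𝒳. Let x₁, …, x_T ∈ 𝒳 be points with covering radius h_X, i.e. for every x ∈ 𝒳 there exists t ∈ {1,…,T} with ‖x − x_t‖ ≤ h_X. Suppose for each t ∈ {1,…,T} the function f_t(x) = ⟨w_t, φ(x)⟩ satisfies ‖w_t‖ ≤ B, and there exists x* ∈ 𝒳 such that f_t(x*) ≥ f_t(x) for all x ∈ 𝒳 and all t. Then min_{1≤t≤T} (f_t(x*) − f_t(x_t)) ≤ B·√(2 − 2·Φ(h_X)). -/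
open scoped RealInnerProductSpace

noncomputable section

/-- Theorem 9 (fully adversarial regret bound for a shift-invariant kernel):
if the points `x₁,…,x_T` have covering radius `h_X` in `𝒳` and each `f_t` lies in the
RKHS ball of radius `B` with common maximizer `x*`, then
`min_t (f_t(x*) − f_t(x_t)) ≤ B·√(2 − 2Φ(h_X))`. -/
theorem statement_5
    {H : Type*} [NormedAddCommGroup H] [InnerProductSpace ℝ H]
    (d : ℕ) (S : Set (EuclideanSpace ℝ (Fin d)))
    (φ : EuclideanSpace ℝ (Fin d) → H)
    (Φ : ℝ → ℝ)
    (hΦmono : ∀ s t : ℝ, 0 ≤ s → s ≤ t → Φ t ≤ Φ s)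
    (hΦ0 : Φ 0 ≤ 1)
    (hshift : ∀ x ∈ S, ∀ y ∈ S, (⟪φ x, φ y⟫ : ℝ) = Φ (‖x - y‖))
    (B : ℝ) (T : ℕ) (hT : 0 < T)
    (x : Fin T → EuclideanSpace ℝ (Fin d)) (hxS : ∀ t : Fin T, x t ∈ S)
    (hX : ℝ) (hcover : ∀ a ∈ S, ∃ t : Fin T, ‖a - x t‖ ≤ hX)
    (w : Fin T → H) (hw : ∀ t : Fin T, ‖w t‖ ≤ B)
    (xstar : EuclideanSpace ℝ (Fin d)) (hstarS : xstar ∈ S)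
    (hstar : ∀ t : Fin T, ∀ a ∈ S, (⟪w t, φ a⟫ : ℝ) ≤ ⟪w t, φ xstar⟫) :
    (Finset.univ.inf' (Finset.univ_nonempty_iff.mpr (Fin.pos_iff_nonempty.mp hT))
        fun t => (⟪w t, φ xstar⟫ : ℝ) - ⟪w t, φ (x t)⟫) ≤
      B * Real.sqrt (2 - 2 * Φ hX) := by
  obtain ⟨t, ht⟩ := hcover xstar hstarS
  have hB : 0 ≤ B := le_trans (norm_nonneg _) (hw t)
  have hXnn : 0 ≤ hX := le_trans (norm_nonneg _) ht
  have hΦle : Φ hX ≤ Φ ‖xstar - x t‖ := hΦmono _ _ (norm_nonneg _) ht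
  -- ‖φ xstar - φ (x t)‖² ≤ 2 - 2 Φ hX
  have hsq : ‖φ xstar - φ (x t)‖ ^ 2 ≤ 2 - 2 * Φ hX := by
    have : ‖φ xstar - φ (x t)‖ ^ 2 =
        ⟪φ xstar, φ xstar⟫ - 2 * ⟪φ xstar, φ (x t)⟫ + ⟪φ (x t), φ (x t)⟫ := by
      rw [@norm_sub_sq_real, real_inner_self_eq_norm_sq, real_inner_self_eq_norm_sq]
    rw [this, hshift _ hstarS _ hstarS, hshift _ hstarS _ (hxS t),
      hshift _ (hxS t) _ (hxS t)]
    simp only [sub_self, norm_zero]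
    nlinarith
  have hnormle : ‖φ xstar - φ (x t)‖ ≤ Real.sqrt (2 - 2 * Φ hX) := by
    rw [← Real.sqrt_sq (norm_nonneg (φ xstar - φ (x t)))]
    exact Real.sqrt_le_sqrt hsq
  have key : (⟪w t, φ xstar⟫ : ℝ) - ⟪w t, φ (x t)⟫ ≤ B * Real.sqrt (2 - 2 * Φ hX) := by
    calc (⟪w t, φ xstar⟫ : ℝ) - ⟪w t, φ (x t)⟫ = ⟪w t, φ xstar - φ (x t)⟫ := by
          rw [inner_sub_right]
      _ ≤ ‖w t‖ * ‖φ xstar - φ (x t)‖ := real_inner_le_norm _ _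
      _ ≤ B * Real.sqrt (2 - 2 * Φ hX) :=
          mul_le_mul (hw t) hnormle (norm_nonneg _) hB
  exact le_trans (Finset.inf'_le _ (Finset.mem_univ t)) key
end
end

section
/- Let 𝒳 ⊆ ℝ^d, let C > 0, and suppose the kernel is the squared exponential kernel: ⟨φ(x), φ(y)⟩ = exp(−C·‖x − y‖²) for all x, y ∈ 𝒳. Let x₁, …, x_T ∈ 𝒳 be points such that for every x ∈ 𝒳 there exists t ∈ {1,…,T} with ‖x − x_t‖ ≤ h_X. Suppose for each t ∈ {1,…,T} the function f_t(x) = ⟨w_t, φ(x)⟩ satisfies ‖w_t‖ ≤ B, and there exists x* ∈ 𝒳 such that f_t(x*) ≥ f_t(x) for all x ∈ 𝒳 and all t. Then min_{1≤t≤T} (f_t(x*) − f_t(x_t)) ≤ B·√(2C)·h_X. -/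
open scoped RealInnerProductSpace

noncomputable section

/-- Corollary 2 (fully adversarial regret bound for the squared exponential kernel):
if the points `x₁,…,x_T` have covering radius `h_X` in `𝒳` and each `f_t` lies in the
RKHS ball of radius `B` with common maximizer `x*`, then
`min_t (f_t(x*) − f_t(x_t)) ≤ B·√(2C)·h_X`. -/
theorem statement_6
    {H : Type*} [NormedAddCommGroup H] [InnerProductSpace ℝ H]
    (d : ℕ) (S : Set (EuclideanSpace ℝ (Fin d)))
    (φ : EuclideanSpace ℝ (Fin d) → H)
    (C : ℝ) (hC : 0 < C)
    (hSE : ∀ x ∈ S, ∀ y ∈ S, (⟪φ x, φ y⟫ : ℝ) = Real.exp (-C * ‖x - y‖ ^ 2))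
    (B : ℝ) (T : ℕ) (hT : 0 < T)
    (x : Fin T → EuclideanSpace ℝ (Fin d)) (hxS : ∀ t : Fin T, x t ∈ S)
    (hX : ℝ) (hcover : ∀ a ∈ S, ∃ t : Fin T, ‖a - x t‖ ≤ hX)
    (w : Fin T → H) (hw : ∀ t : Fin T, ‖w t‖ ≤ B)
    (xstar : EuclideanSpace ℝ (Fin d)) (hstarS : xstar ∈ S)
    (hstar : ∀ t : Fin T, ∀ a ∈ S, (⟪w t, φ a⟫ : ℝ) ≤ ⟪w t, φ xstar⟫) :
    (Finset.univ.inf' (Finset.univ_nonempty_iff.mpr (Fin.pos_iff_nonempty.mp hT))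
        fun t => (⟪w t, φ xstar⟫ : ℝ) - ⟪w t, φ (x t)⟫) ≤
      B * Real.sqrt (2 * C) * hX := by
  obtain ⟨t, ht⟩ := hcover xstar hstarS
  refine le_trans (Finset.inf'_le _ (Finset.mem_univ t)) ?_
  have hB0 : 0 ≤ B := le_trans (norm_nonneg _) (hw t)
  have hh0 : 0 ≤ hX := le_trans (norm_nonneg _) ht
  set a := φ xstar with ha
  set b := φ (x t) with hb
  have haa : ‖a‖ ^ 2 = 1 := by
    rw [← real_inner_self_eq_norm_sq, ha, hSE xstar hstarS xstar hstarS]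
    simp
  have hbb : ‖b‖ ^ 2 = 1 := by
    rw [← real_inner_self_eq_norm_sq, hb, hSE (x t) (hxS t) (x t) (hxS t)]
    simp
  have hab : (⟪a, b⟫ : ℝ) = Real.exp (-C * ‖xstar - x t‖ ^ 2) :=
    hSE xstar hstarS (x t) (hxS t)
  have hnsq : ‖a - b‖ ^ 2 ≤ 2 * C * hX ^ 2 := by
    have hexp : 1 - C * ‖xstar - x t‖ ^ 2 ≤ Real.exp (-C * ‖xstar - x t‖ ^ 2) := by
      have := Real.add_one_le_exp (-C * ‖xstar - x t‖ ^ 2)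
      linarith
    have hr : ‖xstar - x t‖ ^ 2 ≤ hX ^ 2 :=
      pow_le_pow_left₀ (norm_nonneg _) ht 2
    have hCr : C * ‖xstar - x t‖ ^ 2 ≤ C * hX ^ 2 :=
      mul_le_mul_of_nonneg_left hr hC.le
    have hexpand : ‖a - b‖ ^ 2 = ‖a‖ ^ 2 - 2 * ⟪a, b⟫ + ‖b‖ ^ 2 :=
      norm_sub_sq_real a b
    rw [hexpand, haa, hbb, hab]
    nlinarith
  have hnorm : ‖a - b‖ ≤ Real.sqrt (2 * C) * hX := by
    have h1 : ‖a - b‖ = Real.sqrt (‖a - b‖ ^ 2) := by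
      rw [Real.sqrt_sq (norm_nonneg _)]
    have h2 : Real.sqrt (2 * C * hX ^ 2) = Real.sqrt (2 * C) * hX := by
      rw [Real.sqrt_mul (by positivity), Real.sqrt_sq hh0]
    rw [h1, ← h2]
    exact Real.sqrt_le_sqrt hnsq
  calc (⟪w t, a⟫ : ℝ) - ⟪w t, b⟫ = ⟪w t, a - b⟫ := by rw [inner_sub_right]
    _ ≤ ‖w t‖ * ‖a - b‖ := real_inner_le_norm _ _
    _ ≤ B * (Real.sqrt (2 * C) * hX) :=
        mul_le_mul (hw t) hnorm (norm_nonneg _) hB0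
    _ = B * Real.sqrt (2 * C) * hX := by ring
end
end

section
/- Let f(x) = ⟨w, φ(x)⟩ for some w ∈ H, and let x₁, …, x_t ∈ X have invertible Gram matrix K_t. Then for every x ∈ X, (m_t(x) − f(x))² ≤ ‖w‖² · σ_t²(x). -/
open scoped RealInnerProductSpace
open Matrix

noncomputable section

variable {X : Type*} {H : Type*} [NormedAddCommGroup H] [InnerProductSpace ℝ H]

/-- Lemma 1: `(m_t(x) − f(x))² ≤ ‖w‖²·σ_t²(x)`. -/
theorem statement_7
    (φ : X → H) (w : H) (f : X → ℝ) (hf : ∀ a, f a = ⟪w, φ a⟫)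
    (t : ℕ) (xs : Fin t → X) (hinv : IsUnit (gram φ xs).det)
    (a : X) :
    (meanFn φ f xs a - f a) ^ 2 ≤ ‖w‖ ^ 2 * varFn φ xs a := by

  classical
  set K := gram φ xs with hK
  set kv := kvec φ xs a with hkv
  set c := K⁻¹ *ᵥ kv with hc
  have hKsym : Kᵀ = K := by
    ext i j
    simp [hK, _root_.gram, ker, Matrix.transpose_apply, real_inner_comm]
  have hKinvsym : (K⁻¹)ᵀ = K⁻¹ := by
    rw [Matrix.transpose_nonsing_inv, hKsym]
  set v : H := (∑ i, c i • φ (xs i)) - φ a with hv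
  have hmean : meanFn φ f xs a - f a = ⟪w, v⟫ := by
    have h1 : meanFn φ f xs a = c ⬝ᵥ (fun i => f (xs i)) := by
      rw [meanFn, Matrix.dotProduct_mulVec, ← hK, ← hkv,
        show kv ᵥ* K⁻¹ = (K⁻¹)ᵀ *ᵥ kv from (Matrix.mulVec_transpose _ _).symm,
        hKinvsym, hc]
    rw [h1, hv, inner_sub_right, inner_sum]
    simp only [real_inner_smul_right]
    rw [dotProduct]
    congr 1
    · exact Finset.sum_congr rfl fun i _ => by rw [hf (xs i)]
    · exact hf a
  have hKc : K *ᵥ c = kv := by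
    rw [hc, Matrix.mulVec_mulVec, Matrix.mul_nonsing_inv _ hinv, Matrix.one_mulVec]
  have h1 : ⟪(∑ i, c i • φ (xs i)), φ a⟫ = c ⬝ᵥ kv := by
    rw [sum_inner, dotProduct]
    refine Finset.sum_congr rfl fun i _ => ?_
    simp [hkv, kvec, ker, real_inner_smul_left, real_inner_smul_right, real_inner_comm]
  have h3 : ⟪(∑ i, c i • φ (xs i)), (∑ j, c j • φ (xs j))⟫ = c ⬝ᵥ (K *ᵥ c) := by
    rw [sum_inner, dotProduct]
    refine Finset.sum_congr rfl fun i _ => ?_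
    rw [inner_sum, Matrix.mulVec, dotProduct, Finset.mul_sum]
    refine Finset.sum_congr rfl fun j _ => ?_
    simp only [real_inner_smul_left, real_inner_smul_right]
    simp [hK, _root_.gram, ker]
    ring
  have h2 : ⟪φ a, (∑ i, c i • φ (xs i))⟫ = c ⬝ᵥ kv := by
    rw [real_inner_comm]; exact h1
  have hvar : varFn φ xs a = ⟪v, v⟫ := by
    rw [hv, inner_sub_left, inner_sub_right, inner_sub_right, h3, h2, hKc,
      dotProduct_comm c kv]
    rw [varFn, ← hkv, ← hK, ← hc]
    simp [ker]
    rw [h1, dotProduct_comm]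
  rw [hmean, hvar, sq]
  calc ⟪w, v⟫ * ⟪w, v⟫ ≤ ‖w‖ * ‖v‖ * (‖w‖ * ‖v‖) := by
        have h := abs_real_inner_le_norm w v
        have h2 : |⟪w, v⟫| * |⟪w, v⟫| ≤ ‖w‖ * ‖v‖ * (‖w‖ * ‖v‖) :=
          mul_le_mul h h (abs_nonneg _) (mul_nonneg (norm_nonneg _) (norm_nonneg _))
        calc ⟪w, v⟫ * ⟪w, v⟫ = |⟪w, v⟫| * |⟪w, v⟫| := (abs_mul_abs_self _).symm
          _ ≤ _ := h2
    _ = ‖w‖ ^ 2 * ⟪v, v⟫ := by rw [real_inner_self_eq_norm_mul_norm]; ring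
end
end

section
/- Let f(x) = ⟨w, φ(x)⟩ for some w ∈ H, and let x₁, …, x_t ∈ X have invertible Gram matrix K_t. Then for any points x̂₁, …, x̂_L ∈ X, (Σ_{i=1}^L m_t(x̂_i) − Σ_{i=1}^L f(x̂_i))² ≤ ‖w‖² · (𝟙ᵀ A 𝟙), where A is the L×L matrix with entries A_{ij} = k(x̂_i, x̂_j) − k_t(x̂_i)ᵀ K_t⁻¹ k_t(x̂_j) and 𝟙 is the all-ones vector in ℝ^L. -/
open scoped RealInnerProductSpace
open Matrix

noncomputable section

variable {X : Type*} {H : Type*} [NormedAddCommGroup H] [InnerProductSpace ℝ H]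

/-- The noise-free batch covariance matrix `cov_t(X̂,X̂)` with entries
`A_{ij} = k(x̂_i,x̂_j) − k_t(x̂_i)ᵀ K_t⁻¹ k_t(x̂_j)`. -/
def covMat (φ : X → H) {t L : ℕ} (xs : Fin t → X) (XX : Fin L → X) :
    Matrix (Fin L) (Fin L) ℝ :=
  Matrix.of fun i j =>
    ker φ (XX i) (XX j) - kvec φ xs (XX i) ⬝ᵥ ((gram φ xs)⁻¹ *ᵥ kvec φ xs (XX j))

/-- Lemma 3: `(Σᵢ m_t(x̂ᵢ) − Σᵢ f(x̂ᵢ))² ≤ ‖w‖²·(𝟙ᵀ A 𝟙)`. -/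
theorem statement_10
    (φ : X → H) (w : H) (f : X → ℝ) (hf : ∀ a, f a = ⟪w, φ a⟫)
    (t L : ℕ) (xs : Fin t → X) (hinv : IsUnit (gram φ xs).det)
    (xhat : Fin L → X) :
    (∑ i, meanFn φ f xs (xhat i) - ∑ i, f (xhat i)) ^ 2 ≤
      ‖w‖ ^ 2 * ∑ i, ∑ j, covMat φ xs xhat i j := by

  classical
  set K := gram φ xs with hK
  have hKsymm : Kᵀ = K := by
    ext i j
    simp [hK, _root_.gram, ker, real_inner_comm]
  have hKinvsymm : (K⁻¹)ᵀ = K⁻¹ := by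
    rw [Matrix.transpose_nonsing_inv, hKsymm]
  set c : Fin L → Fin t → ℝ := fun i => K⁻¹ *ᵥ kvec φ xs (xhat i) with hc
  set ψ : Fin L → H := fun i => (∑ j, c i j • φ (xs j)) - φ (xhat i) with hψ
  have hdot : ∀ (v : Fin t → ℝ) i,
      kvec φ xs (xhat i) ⬝ᵥ (K⁻¹ *ᵥ v) = c i ⬝ᵥ v := by
    intro v i
    rw [Matrix.dotProduct_mulVec, hc]
    rw [← Matrix.mulVec_transpose, hKinvsymm]
  have hmean : ∀ i, ⟪w, ψ i⟫ = meanFn φ f xs (xhat i) - f (xhat i) := by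
    intro i
    have h1 : meanFn φ f xs (xhat i) = c i ⬝ᵥ (fun j => f (xs j)) := by
      rw [meanFn, ← hK, hdot]
    rw [hψ]
    simp only [inner_sub_right, inner_sum, real_inner_smul_right]
    rw [h1, ← hf (xhat i)]
    simp [dotProduct, hf, mul_comm]
  have hcov : ∀ i j, ⟪ψ i, ψ j⟫ = covMat φ xs xhat i j := by
    intro i j
    have hKc : ∀ j, K *ᵥ c j = kvec φ xs (xhat j) := by
      intro j
      rw [hc, Matrix.mulVec_mulVec, Matrix.mul_nonsing_inv _ hinv, Matrix.one_mulVec]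
    have e1 : ⟪∑ p, c i p • φ (xs p), ∑ q, c j q • φ (xs q)⟫
        = c i ⬝ᵥ (K *ᵥ c j) := by
      simp only [inner_sum, sum_inner, real_inner_smul_left, real_inner_smul_right]
      rw [Finset.sum_comm]
      simp only [dotProduct, Matrix.mulVec, hK, _root_.gram, ker, Matrix.of_apply,
        Finset.mul_sum]
      exact Finset.sum_congr rfl fun p _ => Finset.sum_congr rfl fun q _ => by ring
    have e2 : ⟪∑ p, c i p • φ (xs p), φ (xhat j)⟫ = c i ⬝ᵥ kvec φ xs (xhat j) := by
      simp only [sum_inner, real_inner_smul_left]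
      simp [dotProduct, kvec, ker, real_inner_comm]
    have e3 : ⟪φ (xhat i), ∑ q, c j q • φ (xs q)⟫
        = kvec φ xs (xhat i) ⬝ᵥ (K⁻¹ *ᵥ kvec φ xs (xhat j)) := by
      simp only [inner_sum, real_inner_smul_right]
      simp [dotProduct, hc, kvec, ker, mul_comm]
    rw [hψ]
    simp only [inner_sub_left, inner_sub_right]
    rw [e1, e2, e3, hKc]
    simp [covMat, ker, hK]
  have hsum : ∑ i, meanFn φ f xs (xhat i) - ∑ i, f (xhat i) = ⟪w, ∑ i, ψ i⟫ := by
    rw [inner_sum, ← Finset.sum_sub_distrib]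
    exact Finset.sum_congr rfl fun i _ => (hmean i).symm
  rw [hsum]
  have hCS := real_inner_mul_inner_self_le w (∑ i, ψ i)
  have hnorm : ⟪∑ i, ψ i, ∑ i, ψ i⟫ = ∑ i, ∑ j, covMat φ xs xhat i j := by
    rw [inner_sum]
    refine Finset.sum_congr rfl fun j _ => ?_
    rw [sum_inner]
    exact Finset.sum_congr rfl fun i _ => (hcov i j).trans (by simp [covMat, ker, real_inner_comm, hK]; rw [Matrix.dotProduct_mulVec, ← Matrix.mulVec_transpose, hKinvsymm, dotProduct_comm])
  calc ⟪w, ∑ i, ψ i⟫ ^ 2 = ⟪w, ∑ i, ψ i⟫ * ⟪w, ∑ i, ψ i⟫ := sq _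
    _ ≤ ⟪w, w⟫ * ⟪∑ i, ψ i, ∑ i, ψ i⟫ := hCS
    _ = ‖w‖ ^ 2 * ∑ i, ∑ j, covMat φ xs xhat i j := by
        rw [hnorm, real_inner_self_eq_norm_sq]
end
end

section
/- Let A be an L×L real symmetric positive semidefinite matrix, let β > 0 satisfy ‖A‖₂ ≤ β (spectral norm, i.e. every eigenvalue of A is at most β), and let σ > 0. Then tr(A) ≤ (β / log(1 + β·σ⁻²)) · log det(I + σ⁻² A). -/
noncomputable section

open Matrix Finset

lemma scalar_ineq (c β x : ℝ) (hc : 0 < c) (hβ : 0 < β) (h0 : 0 ≤ x) (h1 : x ≤ β) :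
    x * Real.log (1 + β * c) ≤ β * Real.log (1 + c * x) := by
  have key := strictConcaveOn_log_Ioi.concaveOn.2
    (show (1:ℝ) ∈ Set.Ioi 0 by simp)
    (show (1 + β * c) ∈ Set.Ioi 0 by simp; positivity)
    (show (0:ℝ) ≤ 1 - x / β by rw [sub_nonneg]; exact div_le_one_of_le₀ h1 hβ.le)
    (show (0:ℝ) ≤ x / β by positivity)
    (show (1 - x / β) + x / β = 1 by ring)
  have h1' : (1 - x / β) • (1:ℝ) + (x / β) • (1 + β * c) = 1 + c * x := by
    field_simp; simp only [smul_eq_mul, mul_one]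
    rw [div_mul_eq_mul_div, ← add_div, div_eq_iff hβ.ne']; ring
  rw [h1', Real.log_one, smul_eq_mul, smul_eq_mul, mul_zero, zero_add] at key
  calc x * Real.log (1 + β * c) = β * (x / β * Real.log (1 + β * c)) := by field_simp
    _ ≤ β * Real.log (1 + c * x) := by
        exact mul_le_mul_of_nonneg_left key hβ.le

/-- Lemma 7: for a positive semidefinite `L×L` matrix `A` whose eigenvalues are all at
most `β` (i.e. spectral norm `‖A‖₂ ≤ β`), and `σ > 0`,
`tr(A) ≤ (β / log(1 + β·σ⁻²)) · log det(I + σ⁻²A)`. -/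
theorem statement_12
    (L : ℕ) (A : Matrix (Fin L) (Fin L) ℝ)
    (hA : A.PosSemidef)
    (β : ℝ) (hβpos : 0 < β)
    (hβ : ∀ i : Fin L, hA.1.eigenvalues i ≤ β)
    (σ : ℝ) (hσ : 0 < σ) :
    A.trace ≤ (β / Real.log (1 + β * (σ ^ 2)⁻¹)) *
      Real.log ((1 + (σ ^ 2)⁻¹ • A).det) := by
  set c : ℝ := (σ ^ 2)⁻¹ with hcdef
  have hc : 0 < c := by positivity
  have hev : ∀ i, 0 ≤ hA.1.eigenvalues i := hA.eigenvalues_nonneg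
  set U : Matrix (Fin L) (Fin L) ℝ := (hA.1.eigenvectorUnitary : Matrix (Fin L) (Fin L) ℝ)
  have hU : U * star U = 1 := (Matrix.mem_unitaryGroup_iff).mp hA.1.eigenvectorUnitary.2
  have hspec : A = U * Matrix.diagonal hA.1.eigenvalues * star U := by
    have := hA.1.spectral_theorem
    simpa using this
  -- det computation
  have hdiag : (1 : Matrix (Fin L) (Fin L) ℝ) + c • Matrix.diagonal hA.1.eigenvalues
      = Matrix.diagonal (fun i => 1 + c * hA.1.eigenvalues i) := by
    rw [← Matrix.diagonal_one, ← Matrix.diagonal_smul, ← Matrix.diagonal_add]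
    rfl
  have hconj : (1 : Matrix (Fin L) (Fin L) ℝ) + c • A
      = U * Matrix.diagonal (fun i => 1 + c * hA.1.eigenvalues i) * star U := by
    rw [← hdiag, Matrix.mul_add, Matrix.add_mul, Matrix.mul_one, hU,
      Matrix.mul_smul, Matrix.smul_mul, ← hspec]
  have hdet : ((1 : Matrix (Fin L) (Fin L) ℝ) + c • A).det
      = ∏ i, (1 + c * hA.1.eigenvalues i) := by
    rw [hconj, Matrix.det_mul_right_comm, hU, Matrix.one_mul, Matrix.det_diagonal]
  have hpos : ∀ i : Fin L, 0 < 1 + c * hA.1.eigenvalues i := by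
    intro i
    have := hev i
    positivity
  have hlog : Real.log ((1 + c • A).det) = ∑ i, Real.log (1 + c * hA.1.eigenvalues i) := by
    rw [hdet, Real.log_prod]
    exact fun i _ => (hpos i).ne'
  have hU' : star U * U = 1 := (Matrix.mem_unitaryGroup_iff').mp hA.1.eigenvectorUnitary.2
  have htr : A.trace = ∑ i, hA.1.eigenvalues i := by
    have h2 := congrArg Matrix.trace hspec
    rwa [Matrix.trace_mul_cycle, hU', Matrix.one_mul,
      Matrix.trace_diagonal] at h2
  have hlogpos : 0 < Real.log (1 + β * c) := by
    apply Real.log_pos; nlinarith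
  rw [htr, hlog, div_mul_eq_mul_div, le_div_iff₀ hlogpos, Finset.sum_mul,
    Finset.mul_sum]
  exact Finset.sum_le_sum fun i _ => scalar_ineq c β _ hc hβpos (hev i) (hβ i)
end
end

section
/- Let σ > 0, let x₁, …, x_t ∈ X be pairwise distinct, let h(x) = ⟨w_h, ψ(x)⟩ for some w_h ∈ H′, let g : X → ℝ satisfy |g(x)| ≤ G·σ for all x ∈ X with G ≥ 0, and set f = h − g. Then for every x ∈ X with x ∉ {x₁,…,x_t}, |m̂_t(x) − f(x)| ≤ ‖w_h‖·σ̂_t(x) + (‖w_h‖ + G)·σ, where m̂_t(x) = k_t(x)ᵀ (K_t + σ²I)⁻¹ (h(x₁),…,h(x_t))ᵀ, σ̂_t²(x) = k(x,x) − k_t(x)ᵀ (K_t + σ²I)⁻¹ k_t(x), and σ̂_t(x) = √(σ̂_t²(x)). -/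
open scoped RealInnerProductSpace
open Matrix

noncomputable section

variable {X : Type*} {H : Type*} {H' : Type*}
  [NormedAddCommGroup H] [InnerProductSpace ℝ H]
  [NormedAddCommGroup H'] [InnerProductSpace ℝ H']

/-- Regularized mean prediction `m̂_t(a) = k_t(a)ᵀ (K_t + σ²I)⁻¹ (h(x₁),…,h(x_t))ᵀ`. -/
def rmeanFn (σ : ℝ) (φ : X → H) (hfun : X → ℝ) {t : ℕ} (xs : Fin t → X) (a : X) : ℝ :=
  kvec φ xs a ⬝ᵥ ((gram φ xs + σ ^ 2 • 1)⁻¹ *ᵥ (fun i => hfun (xs i)))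

/-- Regularized variance `σ̂_t²(a) = k(a,a) − k_t(a)ᵀ (K_t + σ²I)⁻¹ k_t(a)`. -/
def rvarFn (σ : ℝ) (φ : X → H) {t : ℕ} (xs : Fin t → X) (a : X) : ℝ :=
  ker φ a a - kvec φ xs a ⬝ᵥ ((gram φ xs + σ ^ 2 • 1)⁻¹ *ᵥ kvec φ xs a)

/-- `σ̂_t(a) = √(σ̂_t²(a))`. -/
def rsigmaFn (σ : ℝ) (φ : X → H) {t : ℕ} (xs : Fin t → X) (a : X) : ℝ :=
  Real.sqrt (rvarFn σ φ xs a)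

lemma dot_inner_aux {t : ℕ} (ψv : Fin t → H) (M : Matrix (Fin t) (Fin t) ℝ)
    (hM : ∀ i j, M i j = ⟪ψv i, ψv j⟫) (v w : Fin t → ℝ) :
    v ⬝ᵥ (M *ᵥ w) = ⟪∑ i, v i • ψv i, ∑ j, w j • ψv j⟫ := by
  simp only [inner_sum, sum_inner, real_inner_smul_left, real_inner_smul_right,
    dotProduct, Matrix.mulVec, Matrix.of_apply, Finset.mul_sum, hM]
  rw [Finset.sum_comm]
  exact Finset.sum_congr rfl fun i _ => Finset.sum_congr rfl fun j _ => by
    rw [real_inner_comm]; ring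

lemma gram_posSemidef {t : ℕ} (φ : X → H) (xs : Fin t → X) : (gram φ xs).PosSemidef := by
  refine Matrix.PosSemidef.of_dotProduct_mulVec_nonneg ?_ ?_
  · ext i j
    simp [_root_.gram, ker, Matrix.conjTranspose, real_inner_comm]
  · intro v
    have h := dot_inner_aux (fun i => φ (xs i)) (gram φ xs) (fun i j => rfl) v v
    simp only [star_trivial]
    rw [h]
    exact real_inner_self_nonneg

lemma A_posDef {t : ℕ} (φ : X → H) (xs : Fin t → X) {σ : ℝ} (hσ : 0 < σ) :
    (gram φ xs + σ ^ 2 • (1 : Matrix (Fin t) (Fin t) ℝ)).PosDef := by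
  refine Matrix.PosDef.posSemidef_add (gram_posSemidef φ xs) ?_
  refine Matrix.PosDef.of_dotProduct_mulVec_pos ?_ ?_
  · ext i j
    simp [Matrix.conjTranspose_apply, Matrix.one_apply, eq_comm]
  · intro x hx
    have h1 : (σ ^ 2 • (1 : Matrix (Fin t) (Fin t) ℝ)) *ᵥ x = σ ^ 2 • x := by
      rw [Matrix.smul_mulVec, Matrix.one_mulVec]
    rw [h1]
    have := Matrix.dotProduct_star_self_pos_iff.mpr hx
    have h2 : star x ⬝ᵥ (σ ^ 2 • x) = σ ^ 2 * (star x ⬝ᵥ x) := by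
      simp [dotProduct_smul, smul_eq_mul]
    rw [h2]
    positivity

/-- Lemma 9 (perturbation setting): for `x` distinct from the queried points,
`|m̂_t(x) − f(x)| ≤ ‖w_h‖·σ̂_t(x) + (‖w_h‖ + G)·σ`. -/
theorem statement_15 [DecidableEq X]
    (φ : X → H) (ψ : X → H')
    (σ : ℝ) (hσ : 0 < σ)
    (hker : ∀ a b : X, (⟪ψ a, ψ b⟫ : ℝ) = ⟪φ a, φ b⟫ + σ ^ 2 * (if a = b then 1 else 0))
    (wh : H') (hfun : X → ℝ) (hh : ∀ a, hfun a = ⟪wh, ψ a⟫)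
    (g : X → ℝ) (G : ℝ) (hG : 0 ≤ G) (hg : ∀ a : X, |g a| ≤ G * σ)
    (f : X → ℝ) (hfdef : ∀ a, f a = hfun a - g a)
    (t : ℕ) (xs : Fin t → X) (hinj : Function.Injective xs)
    (a : X) (ha : ∀ i : Fin t, a ≠ xs i) :
    |rmeanFn σ φ hfun xs a - f a| ≤ ‖wh‖ * rsigmaFn σ φ xs a + (‖wh‖ + G) * σ := by
  classical
  set A : Matrix (Fin t) (Fin t) ℝ := gram φ xs + σ ^ 2 • 1 with hAdef
  have hApd : A.PosDef := A_posDef φ xs hσ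
  have hdet : IsUnit A.det := hApd.det_pos.ne'.isUnit
  set kv : Fin t → ℝ := kvec φ xs a with hkv
  set c : Fin t → ℝ := A⁻¹ *ᵥ kv with hc
  have hAc : A *ᵥ c = kv := by
    rw [hc, Matrix.mulVec_mulVec, Matrix.mul_nonsing_inv _ hdet, Matrix.one_mulVec]
  -- symmetry of A⁻¹
  have hAsymm : Aᵀ = A := by
    have := hApd.isHermitian
    rwa [Matrix.IsHermitian, Matrix.conjTranspose] at this
    -- fallback
  have hBsymm : (A⁻¹)ᵀ = A⁻¹ := by
    rw [Matrix.transpose_nonsing_inv, hAsymm]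
  have hswap : ∀ w : Fin t → ℝ, kv ⬝ᵥ (A⁻¹ *ᵥ w) = c ⬝ᵥ w := by
    intro w
    rw [Matrix.dotProduct_mulVec]
    congr 1
    rw [hc]
    conv_rhs => rw [← hBsymm, Matrix.mulVec_transpose]
  -- A entries as inner products of ψ
  have hApsi : ∀ i j, A i j = ⟪ψ (xs i), ψ (xs j)⟫ := by
    intro i j
    rw [hker]
    simp [hAdef, _root_.gram, ker, Matrix.one_apply, hinj.eq_iff]
  -- the key vector
  set s : H' := ∑ i, c i • ψ (xs i) with hs
  set u : H' := s - ψ a with hu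
  -- inner products
  have hss : (⟪s, s⟫ : ℝ) = c ⬝ᵥ kv := by
    rw [hs, ← dot_inner_aux (fun i => ψ (xs i)) A hApsi c c, hAc]
  have hkvi : ∀ i, kv i = ⟪ψ (xs i), ψ a⟫ := by
    intro i
    rw [hker]
    simp [hkv, kvec, ker, real_inner_comm, (ha i).symm]
  have hsa : (⟪s, ψ a⟫ : ℝ) = c ⬝ᵥ kv := by
    rw [hs, sum_inner]
    simp only [real_inner_smul_left]
    exact Finset.sum_congr rfl fun i _ => by rw [hkvi i]
  have haa : (⟪ψ a, ψ a⟫ : ℝ) = ker φ a a + σ ^ 2 := by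
    rw [hker]; simp [ker]
  -- norm of u
  have hu2 : ‖u‖ ^ 2 = rvarFn σ φ xs a + σ ^ 2 := by
    have hns : ‖u‖ ^ 2 = ‖s‖ ^ 2 - 2 * ⟪s, ψ a⟫ + ‖ψ a‖ ^ 2 := by
      rw [hu]; exact norm_sub_sq_real s (ψ a)
    have h1 : ‖s‖ ^ 2 = (⟪s, s⟫ : ℝ) := (real_inner_self_eq_norm_sq s).symm
    have h2 : ‖ψ a‖ ^ 2 = (⟪ψ a, ψ a⟫ : ℝ) := (real_inner_self_eq_norm_sq (ψ a)).symm
    have hrv : rvarFn σ φ xs a = ker φ a a - c ⬝ᵥ kv := by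
      rw [rvarFn, ← hkv, hswap kv, dotProduct_comm]
    rw [hns, h1, h2, hss, hsa, haa, hrv]
    ring
  -- mean formula
  have hmean : rmeanFn σ φ hfun xs a = ⟪wh, s⟫ := by
    rw [rmeanFn, ← hkv, hswap, hs, inner_sum]
    simp only [real_inner_smul_right, dotProduct]
    exact Finset.sum_congr rfl fun i _ => by rw [hh (xs i)]
  -- difference
  have hdiff : rmeanFn σ φ hfun xs a - f a = ⟪wh, u⟫ + g a := by
    rw [hmean, hfdef, hh, hu, inner_sub_right]
    ring
  -- sqrt bound
  have hrvle : rvarFn σ φ xs a + σ ^ 2 ≤ (rsigmaFn σ φ xs a + σ) ^ 2 := by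
    rcases le_or_gt 0 (rvarFn σ φ xs a) with h | h
    · have := Real.sq_sqrt h
      have hnn := Real.sqrt_nonneg (rvarFn σ φ xs a)
      rw [rsigmaFn]
      nlinarith
    · have : Real.sqrt (rvarFn σ φ xs a) = 0 := Real.sqrt_eq_zero_of_nonpos h.le
      rw [rsigmaFn, this]
      nlinarith
  have hun : ‖u‖ ≤ rsigmaFn σ φ xs a + σ := by
    have h0 : (0:ℝ) ≤ rsigmaFn σ φ xs a + σ := by
      have := Real.sqrt_nonneg (rvarFn σ φ xs a)
      rw [rsigmaFn]; linarith
    nlinarith [norm_nonneg u, hu2]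
  -- final estimate
  calc |rmeanFn σ φ hfun xs a - f a| = |⟪wh, u⟫ + g a| := by rw [hdiff]
    _ ≤ |⟪wh, u⟫| + |g a| := abs_add_le _ _
    _ ≤ ‖wh‖ * ‖u‖ + G * σ := add_le_add (abs_real_inner_le_norm wh u) (hg a)
    _ ≤ ‖wh‖ * (rsigmaFn σ φ xs a + σ) + G * σ :=
        add_le_add_left (mul_le_mul_of_nonneg_left hun (norm_nonneg wh)) _
    _ = ‖wh‖ * rsigmaFn σ φ xs a + (‖wh‖ + G) * σ := by ring
end
end

section
/- Let σ > 0, let x₁, …, x_{t−1} ∈ X be pairwise distinct, let h(x) = ⟨w_h, ψ(x)⟩ for some w_h ∈ H′, let g : X → ℝ satisfy |g(x)| ≤ G·σ for all x with G ≥ 0, set f = h − g, and let x* ∈ X satisfy f(x*) ≥ f(x) for all x ∈ X. If x_t ∈ X maximizes the acquisition function, i.e. m̂_{t−1}(x_t) + ‖w_h‖·σ̂_{t−1}(x_t) ≥ m̂_{t−1}(x) + ‖w_h‖·σ̂_{t−1}(x) for all x ∈ X, and if x* and x_t do not belong to {x₁,…,x_{t−1}}, then f(x*) − f(x_t) ≤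 2·‖w_h‖·σ̂_{t−1}(x_t) + 2·(‖w_h‖ + G)·σ. -/
open scoped RealInnerProductSpace
open Matrix

noncomputable section

variable {X : Type*} {H : Type*} {H' : Type*}
  [NormedAddCommGroup H] [InnerProductSpace ℝ H]
  [NormedAddCommGroup H'] [InnerProductSpace ℝ H']

theorem normsq_expand {E : Type*} [NormedAddCommGroup E] [InnerProductSpace ℝ E] {t : ℕ}
    (v : E) (u : Fin t → E) (c : Fin t → ℝ) :
    ‖v - ∑ i, c i • u i‖^2 =
      ⟪v, v⟫ - 2 * ∑ i, c i * ⟪v, u i⟫ + ∑ i, ∑ j, c i * c j * ⟪u i, u j⟫ := by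
  rw [← real_inner_self_eq_norm_sq]
  simp only [inner_sub_left, inner_sub_right, sum_inner, inner_sum,
    real_inner_smul_left, real_inner_smul_right, Finset.mul_sum]
  simp only [real_inner_comm v]
  rw [Finset.sum_sub_distrib, Finset.sum_comm]
  have hD : (∑ y : Fin t, ∑ x : Fin t, c x * (c y * ⟪u y, u x⟫)) =
      ∑ i, ∑ j, c i * c j * ⟪u i, u j⟫ := by
    apply Finset.sum_congr rfl; intro i _
    apply Finset.sum_congr rfl; intro j _; ring
  rw [hD]
  simp only [two_mul, add_mul]
  rw [Finset.sum_add_distrib]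
  ring

theorem conf_bound [DecidableEq X]
    (φ : X → H) (ψ : X → H') (σ : ℝ) (hσ : 0 < σ)
    (hker : ∀ a b : X, (⟪ψ a, ψ b⟫ : ℝ) = ⟪φ a, φ b⟫ + σ ^ 2 * (if a = b then 1 else 0))
    (wh : H') (hfun : X → ℝ) (hh : ∀ a, hfun a = ⟪wh, ψ a⟫)
    {t : ℕ} (xs : Fin t → X) (hinj : Function.Injective xs)
    (a : X) (ha : ∀ i, a ≠ xs i) :
    0 ≤ rvarFn σ φ xs a ∧
    |hfun a - rmeanFn σ φ hfun xs a| ≤ ‖wh‖ * (rsigmaFn σ φ xs a + σ) := by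
  set M : Matrix (Fin t) (Fin t) ℝ := gram φ xs + σ ^ 2 • 1 with hMdef
  -- gram is PSD
  have hgramsd : (gram φ xs).PosSemidef := by
    rw [posSemidef_iff_dotProduct_mulVec]
    constructor
    · ext i j
      simp [_root_.gram, ker, conjTranspose, real_inner_comm]
    · intro x
      have := normsq_expand (0 : H) (fun i => φ (xs i)) x
      simp only [inner_zero_left, inner_zero_right, mul_zero, zero_sub, mul_zero, sub_zero,
        zero_sub, neg_zero, zero_add, mul_zero, Finset.sum_const_zero] at this
      have hdp : dotProduct (star x) (gram φ xs *ᵥ x) =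
          ∑ i, ∑ j, x i * x j * ⟪φ (xs i), φ (xs j)⟫ := by
        simp only [dotProduct, mulVec, star_trivial, dotProduct, Finset.mul_sum]
        apply Finset.sum_congr rfl; intro i _
        apply Finset.sum_congr rfl; intro j _
        simp [_root_.gram, ker]; ring
      rw [hdp, ← this]
      positivity
  have hsm : ((σ ^ 2 : ℝ) • (1 : Matrix (Fin t) (Fin t) ℝ)).PosDef := by
    rw [smul_one_eq_diagonal]
    exact Matrix.PosDef.diagonal (fun i => by positivity)
  have hM : M.PosDef := Matrix.PosDef.posSemidef_add hgramsd hsm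
  have hMunit : IsUnit M.det := isUnit_iff_isUnit_det _ |>.1 hM.isUnit
  set c : Fin t → ℝ := M⁻¹ *ᵥ kvec φ xs a with hcdef
  have hMc : M *ᵥ c = kvec φ xs a := by
    rw [hcdef, mulVec_mulVec, Matrix.mul_nonsing_inv _ hMunit, one_mulVec]
  have hsplit : gram φ xs *ᵥ c = kvec φ xs a - σ ^ 2 • c := by
    have : (gram φ xs + σ ^ 2 • 1) *ᵥ c = kvec φ xs a := hMc
    rw [add_mulVec, smul_mulVec, one_mulVec] at this
    linear_combination (norm := module) this
  -- φ norm identity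
  have hφ : ‖φ a - ∑ i, c i • φ (xs i)‖ ^ 2 =
      rvarFn σ φ xs a - σ ^ 2 * (c ⬝ᵥ c) := by
    rw [normsq_expand]
    have h1 : (∑ i, c i * ⟪φ a, φ (xs i)⟫) = c ⬝ᵥ kvec φ xs a := by
      simp [dotProduct, kvec, ker]
    have h2 : (∑ i, ∑ j, c i * c j * ⟪φ (xs i), φ (xs j)⟫) = c ⬝ᵥ (gram φ xs *ᵥ c) := by
      simp only [dotProduct, mulVec, Finset.mul_sum]
      apply Finset.sum_congr rfl; intro i _
      apply Finset.sum_congr rfl; intro j _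
      simp [_root_.gram, ker]; ring
    rw [h1, h2, hsplit]
    have h3 : c ⬝ᵥ (kvec φ xs a - σ ^ 2 • c) = c ⬝ᵥ kvec φ xs a - σ ^ 2 * (c ⬝ᵥ c) := by
      simp [dotProduct_sub, dotProduct_smul, smul_eq_mul]
    rw [h3]
    have h4 : rvarFn σ φ xs a = ker φ a a - c ⬝ᵥ kvec φ xs a := by
      rw [rvarFn, ← hMdef, ← hcdef, dotProduct_comm]
    rw [h4, ker]
    ring
  have hvar : 0 ≤ rvarFn σ φ xs a := by
    have h5 : rvarFn σ φ xs a = ‖φ a - ∑ i, c i • φ (xs i)‖ ^ 2 + σ ^ 2 * (c ⬝ᵥ c) := by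
      rw [hφ]; ring
    have : (0:ℝ) ≤ c ⬝ᵥ c :=
      Finset.sum_nonneg fun i _ => mul_self_nonneg _
    nlinarith [sq_nonneg ‖φ a - ∑ i, c i • φ (xs i)‖]
  refine ⟨hvar, ?_⟩
  -- ψ norm identity
  have hψ : ‖ψ a - ∑ i, c i • ψ (xs i)‖ ^ 2 = rvarFn σ φ xs a + σ ^ 2 := by
    rw [normsq_expand]
    have e1 : (⟪ψ a, ψ a⟫ : ℝ) = ker φ a a + σ ^ 2 := by
      rw [hker]; simp [ker]
    have e2 : (∑ i, c i * ⟪ψ a, ψ (xs i)⟫) = c ⬝ᵥ kvec φ xs a := by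
      apply Finset.sum_congr rfl
      intro i _
      rw [hker]
      simp [kvec, ker, ha i]
    have e3 : (∑ i, ∑ j, c i * c j * ⟪ψ (xs i), ψ (xs j)⟫) =
        c ⬝ᵥ (gram φ xs *ᵥ c) + σ ^ 2 * (c ⬝ᵥ c) := by
      have : ∀ i j, (⟪ψ (xs i), ψ (xs j)⟫ : ℝ) =
          gram φ xs i j + σ ^ 2 * (if i = j then 1 else 0) := by
        intro i j
        rw [hker]
        simp only [_root_.gram, ker, Matrix.of_apply]
        congr 1
        by_cases h : i = j
        · simp [h]
        · simp [h, hinj.ne h]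
      simp only [this, mul_add, Finset.sum_add_distrib]
      congr 1
      · simp only [dotProduct, mulVec, Finset.mul_sum]
        exact Finset.sum_congr rfl fun i _ => Finset.sum_congr rfl fun j _ => by ring
      · rw [dotProduct, Finset.mul_sum]
        apply Finset.sum_congr rfl; intro i _
        simp only [mul_ite, mul_one, mul_zero]
        rw [Finset.sum_ite_eq Finset.univ i]
        simp; ring
    rw [e1, e2, e3, hsplit]
    have h3 : c ⬝ᵥ (kvec φ xs a - σ ^ 2 • c) = c ⬝ᵥ kvec φ xs a - σ ^ 2 * (c ⬝ᵥ c) := by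
      simp [dotProduct_sub, dotProduct_smul, smul_eq_mul]
    rw [h3]
    have h4 : rvarFn σ φ xs a = ker φ a a - c ⬝ᵥ kvec φ xs a := by
      rw [rvarFn, ← hMdef, ← hcdef, dotProduct_comm]
    rw [h4]
    ring
  -- mean identity
  have hmean : hfun a - rmeanFn σ φ hfun xs a = ⟪wh, ψ a - ∑ i, c i • ψ (xs i)⟫ := by
    have hMinvsymm : M⁻¹ᵀ = M⁻¹ := hM.isHermitian.inv
    have hcv : kvec φ xs a ᵥ* M⁻¹ = c := by
      rw [hcdef, ← vecMul_transpose, hMinvsymm]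
    have : rmeanFn σ φ hfun xs a = c ⬝ᵥ (fun i => hfun (xs i)) := by
      rw [rmeanFn, ← hMdef, dotProduct_mulVec, hcv]
    rw [this, inner_sub_right, inner_sum]
    simp only [real_inner_smul_right]
    rw [hh]
    congr 1
    simp only [dotProduct]
    apply Finset.sum_congr rfl; intro i _
    rw [hh]
  rw [hmean]
  calc |⟪wh, ψ a - ∑ i, c i • ψ (xs i)⟫| ≤ ‖wh‖ * ‖ψ a - ∑ i, c i • ψ (xs i)‖ :=
        abs_real_inner_le_norm _ _
    _ ≤ ‖wh‖ * (rsigmaFn σ φ xs a + σ) := by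
        apply mul_le_mul_of_nonneg_left _ (norm_nonneg _)
        have hn : ‖ψ a - ∑ i, c i • ψ (xs i)‖ = Real.sqrt (rvarFn σ φ xs a + σ ^ 2) := by
          rw [← hψ, Real.sqrt_sq (norm_nonneg _)]
        rw [hn, rsigmaFn]
        have hb : rvarFn σ φ xs a + σ ^ 2 ≤ (Real.sqrt (rvarFn σ φ xs a) + σ) ^ 2 := by
          have := Real.sq_sqrt hvar
          nlinarith [Real.sqrt_nonneg (rvarFn σ φ xs a)]
        calc Real.sqrt (rvarFn σ φ xs a + σ ^ 2) ≤
              Real.sqrt ((Real.sqrt (rvarFn σ φ xs a) + σ) ^ 2) := Real.sqrt_le_sqrt hb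
          _ = Real.sqrt (rvarFn σ φ xs a) + σ := by
              rw [Real.sqrt_sq (by positivity)]

/-- Lemma 10 (perturbation setting): if `x_t` maximizes the regularized acquisition
function, then `f(x*) − f(x_t) ≤ 2‖w_h‖·σ̂_{t−1}(x_t) + 2(‖w_h‖ + G)·σ`. -/
theorem statement_16 [DecidableEq X]
    (φ : X → H) (ψ : X → H')
    (σ : ℝ) (hσ : 0 < σ)
    (hker : ∀ a b : X, (⟪ψ a, ψ b⟫ : ℝ) = ⟪φ a, φ b⟫ + σ ^ 2 * (if a = b then 1 else 0))
    (wh : H') (hfun : X → ℝ) (hh : ∀ a, hfun a = ⟪wh, ψ a⟫)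
    (g : X → ℝ) (G : ℝ) (hG : 0 ≤ G) (hg : ∀ a : X, |g a| ≤ G * σ)
    (f : X → ℝ) (hfdef : ∀ a, f a = hfun a - g a)
    (xstar : X) (hstar : ∀ a : X, f a ≤ f xstar)
    (t : ℕ) (xs : Fin t → X) (hinj : Function.Injective xs)
    (xt : X)
    (hacq : ∀ a : X, rmeanFn σ φ hfun xs a + ‖wh‖ * rsigmaFn σ φ xs a ≤
      rmeanFn σ φ hfun xs xt + ‖wh‖ * rsigmaFn σ φ xs xt)
    (hstar_new : ∀ i : Fin t, xstar ≠ xs i)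
    (hxt_new : ∀ i : Fin t, xt ≠ xs i) :
    f xstar - f xt ≤ 2 * ‖wh‖ * rsigmaFn σ φ xs xt + 2 * (‖wh‖ + G) * σ := by
  obtain ⟨-, h1⟩ := conf_bound φ ψ σ hσ hker wh hfun hh xs hinj xstar hstar_new
  obtain ⟨-, h2⟩ := conf_bound φ ψ σ hσ hker wh hfun hh xs hinj xt hxt_new
  have h1' := abs_le.mp h1
  have h2' := abs_le.mp h2
  have hg1 := abs_le.mp (hg xstar)
  have hg2 := abs_le.mp (hg xt)
  have hac := hacq xstar
  rw [hfdef, hfdef]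
  have hw : 0 ≤ ‖wh‖ := norm_nonneg _
  nlinarith [h1'.1, h1'.2, h2'.1, h2'.2, hg1.1, hg1.2, hg2.1, hg2.2]
end
end

section
/- Let σ > 0, let x₁, …, x_t ∈ X be pairwise distinct, let h(x) = ⟨w_h, ψ(x)⟩ for some w_h ∈ H′, let g : X → ℝ satisfy |g(x)| ≤ G·σ for all x with G ≥ 0, and set f = h − g. Then for any points x̂₁, …, x̂_L ∈ X with x̂_i ∉ {x₁,…,x_t} for all i, |Σ_{i=1}^L m̂_t(x̂_i) − Σ_{i=1}^L f(x̂_i)| ≤ ‖w_h‖·√(𝟙ᵀ A 𝟙 + L²·σ²) + L·G·σ, where A is the L×L matrix with entries A_{ij} = k(x̂_i, x̂_j) − k_t(x̂_i)ᵀ (K_t + σ²I)⁻¹ k_t(x̂_j) and 𝟙 is the all-ones vector in ℝ^L. -/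
open scoped RealInnerProductSpace
open Matrix

noncomputable section

variable {X : Type*} {H : Type*} {H' : Type*}
  [NormedAddCommGroup H] [InnerProductSpace ℝ H]
  [NormedAddCommGroup H'] [InnerProductSpace ℝ H']

/-- The regularized batch covariance matrix `ĉov(X̂,X̂)` after selecting the points `xs`,
with entries `A_{ij} = k(x̂_i,x̂_j) − k_t(x̂_i)ᵀ (K_t + σ²I)⁻¹ k_t(x̂_j)`. -/
def rcovMat (σ : ℝ) (φ : X → H) {t L : ℕ} (xs : Fin t → X) (XX : Fin L → X) :
    Matrix (Fin L) (Fin L) ℝ :=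
  Matrix.of fun i j =>
    ker φ (XX i) (XX j) -
      kvec φ xs (XX i) ⬝ᵥ ((gram φ xs + σ ^ 2 • 1)⁻¹ *ᵥ kvec φ xs (XX j))

lemma inner_sum_smul_sum_smul {E : Type*} [NormedAddCommGroup E] [InnerProductSpace ℝ E]
    {n : ℕ} (v : Fin n → E) (x y : Fin n → ℝ) :
    (⟪∑ i, x i • v i, ∑ j, y j • v j⟫ : ℝ) = ∑ i, ∑ j, x i * y j * ⟪v i, v j⟫ := by
  rw [sum_inner]
  refine Finset.sum_congr rfl fun i _ => ?_
  rw [inner_sum]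
  refine Finset.sum_congr rfl fun j _ => ?_
  rw [real_inner_smul_left, real_inner_smul_right]; ring

/-- Lemma 11 (perturbation setting, batch deviation bound):
`|Σᵢ m̂_t(x̂ᵢ) − Σᵢ f(x̂ᵢ)| ≤ ‖w_h‖·√(𝟙ᵀA𝟙 + L²σ²) + L·G·σ`. -/
theorem statement_17 [DecidableEq X]
    (φ : X → H) (ψ : X → H')
    (σ : ℝ) (hσ : 0 < σ)
    (hker : ∀ a b : X, (⟪ψ a, ψ b⟫ : ℝ) = ⟪φ a, φ b⟫ + σ ^ 2 * (if a = b then 1 else 0))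
    (wh : H') (hfun : X → ℝ) (hh : ∀ a, hfun a = ⟪wh, ψ a⟫)
    (g : X → ℝ) (G : ℝ) (hG : 0 ≤ G) (hg : ∀ a : X, |g a| ≤ G * σ)
    (f : X → ℝ) (hfdef : ∀ a, f a = hfun a - g a)
    (t L : ℕ) (xs : Fin t → X) (hinj : Function.Injective xs)
    (xhat : Fin L → X) (hnew : ∀ (i : Fin L) (j : Fin t), xhat i ≠ xs j) :
    |∑ i, rmeanFn σ φ hfun xs (xhat i) - ∑ i, f (xhat i)| ≤
      ‖wh‖ * Real.sqrt ((∑ i, ∑ j, rcovMat σ φ xs xhat i j) + (L : ℝ) ^ 2 * σ ^ 2) +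
        (L : ℝ) * G * σ := by
  classical
  set M : Matrix (Fin t) (Fin t) ℝ := gram φ xs + σ ^ 2 • 1 with hMdef
  -- entries of M are the ψ-inner products
  have hMentry : ∀ j j' : Fin t, M j j' = ⟪ψ (xs j), ψ (xs j')⟫ := by
    intro j j'
    rw [hker]
    simp only [hMdef, Matrix.add_apply, Matrix.smul_apply, Matrix.one_apply, _root_.gram,
      Matrix.of_apply, ker, smul_eq_mul]
    congr 2
    by_cases h : j = j'
    · simp [h]
    · have hx : xs j ≠ xs j' := fun he => h (hinj he)
      simp [h, hx]
  -- positive definiteness of M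
  have hgramPSD : (gram φ xs).PosSemidef := by
    refine Matrix.posSemidef_iff_dotProduct_mulVec.mpr ⟨?_, fun x => ?_⟩
    · ext i j
      simp [_root_.gram, ker, Matrix.conjTranspose_apply, real_inner_comm]
    · have hx : star x ⬝ᵥ (gram φ xs *ᵥ x) =
          (⟪∑ i, x i • φ (xs i), ∑ j, x j • φ (xs j)⟫ : ℝ) := by
        rw [inner_sum_smul_sum_smul]
        simp only [dotProduct, Matrix.mulVec, _root_.gram, Matrix.of_apply, ker,
          Finset.mul_sum, Pi.star_apply, star_trivial]
        refine Finset.sum_congr rfl fun i _ => Finset.sum_congr rfl fun j _ => by ring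
      rw [hx]
      exact real_inner_self_nonneg
  have hIpd : (σ ^ 2 • (1 : Matrix (Fin t) (Fin t) ℝ)).PosDef := by
    have h1 : σ ^ 2 • (1 : Matrix (Fin t) (Fin t) ℝ) =
        Matrix.diagonal fun _ => σ ^ 2 := by
      ext i j
      by_cases h : i = j <;> simp [Matrix.one_apply, Matrix.diagonal, h]
    rw [h1]
    exact Matrix.posDef_diagonal_iff.mpr fun _ => by positivity
  have hMpd : M.PosDef := Matrix.PosDef.posSemidef_add hgramPSD hIpd
  have hdet : IsUnit M.det := (Matrix.isUnit_iff_isUnit_det M).mp hMpd.isUnit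
  have hMsymm : Mᵀ = M := hMpd.isHermitian
  have hMinvsymm : (M⁻¹)ᵀ = M⁻¹ := by rw [Matrix.transpose_nonsing_inv, hMsymm]
  -- swapping dot products over the symmetric matrix M⁻¹
  have hswap : ∀ u w : Fin t → ℝ, u ⬝ᵥ (M⁻¹ *ᵥ w) = (M⁻¹ *ᵥ u) ⬝ᵥ w := by
    intro u w
    rw [Matrix.dotProduct_mulVec, ← Matrix.mulVec_transpose, hMinvsymm]
  set α : Fin L → Fin t → ℝ := fun i => M⁻¹ *ᵥ kvec φ xs (xhat i) with hα
  have hMα : ∀ i, M *ᵥ α i = kvec φ xs (xhat i) := by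
    intro i
    rw [hα]
    simp only
    rw [Matrix.mulVec_mulVec, Matrix.mul_nonsing_inv M hdet, Matrix.one_mulVec]
  set u : Fin L → H' := fun i => ∑ j, α i j • ψ (xs j) with hu
  set e : Fin L → H' := fun i => u i - ψ (xhat i) with he
  set v : H' := ∑ i, e i with hv
  -- the mean prediction as a dot product with α
  have hmean : ∀ i, rmeanFn σ φ hfun xs (xhat i) = α i ⬝ᵥ (fun j => hfun (xs j)) := by
    intro i
    rw [rmeanFn, ← hMdef, hswap]
  -- ⟪wh, u i⟫ = α i ⬝ᵥ hvec
  have hwh_u : ∀ i, (⟪wh, u i⟫ : ℝ) = α i ⬝ᵥ (fun j => hfun (xs j)) := by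
    intro i
    simp only [hu, inner_sum, real_inner_smul_right, dotProduct]
    exact Finset.sum_congr rfl fun j _ => by rw [hh]
  -- ⟪wh, v⟫ = Σ m̂ − Σ h
  have hwhv : (⟪wh, v⟫ : ℝ) =
      ∑ i, rmeanFn σ φ hfun xs (xhat i) - ∑ i, hfun (xhat i) := by
    rw [hv, inner_sum, ← Finset.sum_sub_distrib]
    refine Finset.sum_congr rfl fun i _ => ?_
    simp only [he, inner_sub_right]
    rw [hwh_u, hmean, hh]
  -- pairwise inner products of the errors
  have hee : ∀ i i' : Fin L, (⟪e i, e i'⟫ : ℝ) =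
      rcovMat σ φ xs xhat i i' + σ ^ 2 * (if xhat i = xhat i' then 1 else 0) := by
    intro i i'
    have h1 : (⟪u i, u i'⟫ : ℝ) = α i ⬝ᵥ kvec φ xs (xhat i') := by
      simp only [hu]
      rw [inner_sum_smul_sum_smul, ← hMα i']
      simp only [Matrix.mulVec, dotProduct, Finset.mul_sum]
      refine Finset.sum_congr rfl fun j _ => Finset.sum_congr rfl fun j' _ => ?_
      rw [hMentry]; ring
    have h2 : (⟪u i, ψ (xhat i')⟫ : ℝ) = α i ⬝ᵥ kvec φ xs (xhat i') := by
      simp only [hu, sum_inner, real_inner_smul_left, dotProduct, kvec, ker]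
      refine Finset.sum_congr rfl fun j _ => ?_
      rw [hker, if_neg (show xs j ≠ xhat i' from fun hxy => hnew i' j hxy.symm),
        real_inner_comm]
      ring
    have h3 : (⟪ψ (xhat i), u i'⟫ : ℝ) =
        kvec φ xs (xhat i) ⬝ᵥ (M⁻¹ *ᵥ kvec φ xs (xhat i')) := by
      have hα' : M⁻¹ *ᵥ kvec φ xs (xhat i') = α i' := rfl
      rw [hα']
      simp only [hu, inner_sum, real_inner_smul_right, dotProduct, kvec, ker]
      refine Finset.sum_congr rfl fun j _ => ?_
      rw [hker, if_neg (hnew i j)]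
      ring
    have h4 : (⟪ψ (xhat i), ψ (xhat i')⟫ : ℝ) =
        ker φ (xhat i) (xhat i') + σ ^ 2 * (if xhat i = xhat i' then 1 else 0) := by
      rw [hker]; rfl
    simp only [he, inner_sub_left, inner_sub_right]
    rw [h1, h2, h3, h4, rcovMat]
    simp only [Matrix.of_apply]
    ring
  -- bound ‖v‖²
  set S : ℝ := (∑ i, ∑ j, rcovMat σ φ xs xhat i j) + (L : ℝ) ^ 2 * σ ^ 2 with hS
  have hvsq : ‖v‖ ^ 2 ≤ S := by
    have hvv : ‖v‖ ^ 2 = ∑ i, ∑ i', (⟪e i, e i'⟫ : ℝ) := by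
      rw [← real_inner_self_eq_norm_sq, hv, sum_inner]
      exact Finset.sum_congr rfl fun i _ => inner_sum _ _ _
    rw [hvv]
    have : ∑ i, ∑ i', (⟪e i, e i'⟫ : ℝ) =
        (∑ i, ∑ i', rcovMat σ φ xs xhat i i') +
          ∑ i, ∑ i', σ ^ 2 * (if xhat i = xhat i' then 1 else 0) := by
      rw [← Finset.sum_add_distrib]
      refine Finset.sum_congr rfl fun i _ => ?_
      rw [← Finset.sum_add_distrib]
      exact Finset.sum_congr rfl fun i' _ => hee i i'
    rw [this, hS]
    have hdelta : ∑ i : Fin L, ∑ i' : Fin L,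
        σ ^ 2 * (if xhat i = xhat i' then 1 else 0) ≤ (L : ℝ) ^ 2 * σ ^ 2 := by
      have hb : ∀ i i' : Fin L, σ ^ 2 * (if xhat i = xhat i' then 1 else 0) ≤ σ ^ 2 := by
        intro i i'
        split <;> simp [sq_nonneg σ]
      calc ∑ i : Fin L, ∑ i' : Fin L, σ ^ 2 * (if xhat i = xhat i' then 1 else 0)
          ≤ ∑ _i : Fin L, ∑ _i' : Fin L, σ ^ 2 := by
            exact Finset.sum_le_sum fun i _ => Finset.sum_le_sum fun i' _ => hb i i'
        _ = (L : ℝ) ^ 2 * σ ^ 2 := by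
            simp [Finset.sum_const, Finset.card_univ]
            ring
    linarith
  have hS0 : 0 ≤ S := le_trans (sq_nonneg _) hvsq
  have hvle : ‖v‖ ≤ Real.sqrt S := by
    rw [← Real.sqrt_sq (norm_nonneg v)]
    exact Real.sqrt_le_sqrt hvsq
  -- assemble
  have hkey : ∑ i, rmeanFn σ φ hfun xs (xhat i) - ∑ i, f (xhat i) =
      (⟪wh, v⟫ : ℝ) + ∑ i, g (xhat i) := by
    rw [hwhv]
    have : ∑ i, f (xhat i) = ∑ i, hfun (xhat i) - ∑ i, g (xhat i) := by
      rw [← Finset.sum_sub_distrib]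
      exact Finset.sum_congr rfl fun i _ => hfdef (xhat i)
    rw [this]; ring
  rw [hkey]
  calc |(⟪wh, v⟫ : ℝ) + ∑ i, g (xhat i)|
      ≤ |(⟪wh, v⟫ : ℝ)| + |∑ i, g (xhat i)| := abs_add_le _ _
    _ ≤ ‖wh‖ * ‖v‖ + (L : ℝ) * G * σ := by
        gcongr
        · exact abs_real_inner_le_norm wh v
        · calc |∑ i, g (xhat i)| ≤ ∑ i, |g (xhat i)| := Finset.abs_sum_le_sum_abs _ _
            _ ≤ ∑ _i : Fin L, G * σ := Finset.sum_le_sum fun i _ => hg (xhat i)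
            _ = (L : ℝ) * G * σ := by
                simp [Finset.sum_const, Finset.card_univ]; ring
    _ ≤ ‖wh‖ * Real.sqrt S + (L : ℝ) * G * σ := by
        gcongr
end
end

section
/- Let σ > 0, let h(x) = ⟨w_h, ψ(x)⟩ for some w_h ∈ H′, let g : X → ℝ satisfy |g(x)| ≤ G·σ for all x with G ≥ 0, set f = h − g, and let x* ∈ X satisfy f(x*) ≥ f(x) for all x ∈ X. Let x₁,…,x_{(n−1)L} be the previously selected points, pairwise distinct, and suppose the L-tuple X_n = (x_{(n−1)L+1}, …, x_{nL}) maximizes, over all L-tuples X = (x¹,…,x^L) of points of X, the batch acquisition (1/L)·Σ_{i=1}^L m̂_{(n−1)L}(xⁱ) + ‖w_h‖·(2·√(tr(ĉov_{n−1}(X,X))/L) − √(𝟙ᵀ ĉov_{n−1}(X,X) 𝟙 / L²)). If x* and the points of X_n do not belong to {x₁,…,x_{(n−1)L}}, then (1/L)·Σ_{i=1}^L (f(x*) − f(x_{(n−1)L+i})) ≤ 2·‖w_h‖·√(tr(ĉov_{n−1}(X_n,X_n))/L) + 2·(‖w_h‖ + G)·σ. -/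
open scoped RealInnerProductSpace
open Matrix

noncomputable section

variable {X : Type*} {H : Type*} {H' : Type*}
  [NormedAddCommGroup H] [InnerProductSpace ℝ H]
  [NormedAddCommGroup H'] [InnerProductSpace ℝ H']

/-- The regularized batch acquisition function:
`(1/L)·Σᵢ m̂(xⁱ) + w·(2√(tr(ĉov(X,X))/L) − √(𝟙ᵀ ĉov(X,X) 𝟙 / L²))`. -/
def rbatchAcq (σ : ℝ) (φ : X → H) (hfun : X → ℝ) (wnorm : ℝ) {t L : ℕ} (xs : Fin t → X)
    (XX : Fin L → X) : ℝ :=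
  (1 / (L : ℝ)) * ∑ i, rmeanFn σ φ hfun xs (XX i) +
    wnorm * (2 * Real.sqrt ((rcovMat σ φ xs XX).trace / (L : ℝ)) -
      Real.sqrt ((∑ i, ∑ j, rcovMat σ φ xs XX i j) / (L : ℝ) ^ 2))



lemma core_id {E : Type*} [NormedAddCommGroup E] [InnerProductSpace ℝ E]
    {t : ℕ} (ρ : Fin t → E) (τ : ℝ)
    (M : Matrix (Fin t) (Fin t) ℝ)
    (hM : ∀ i j, M i j = ⟪ρ i, ρ j⟫ + τ * (if i = j then 1 else 0))
    (hMu : IsUnit M.det)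
    (v : E) (u : Fin t → ℝ) (hu : ∀ j, u j = ⟪v, ρ j⟫) :
    ⟪v, v⟫ - u ⬝ᵥ (M⁻¹ *ᵥ u)
      = ‖v - ∑ j, (M⁻¹ *ᵥ u) j • ρ j‖ ^ 2 + τ * ∑ j, ((M⁻¹ *ᵥ u) j) ^ 2 := by
  set β := M⁻¹ *ᵥ u with hβ
  have hMβ : M *ᵥ β = u := by
    rw [hβ, Matrix.mulVec_mulVec, Matrix.mul_nonsing_inv _ hMu, Matrix.one_mulVec]
  have hBu : ∑ j, β j * u j = ∑ i, ∑ j, β i * β j * ⟪ρ i, ρ j⟫ + τ * ∑ j, (β j)^2 := by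
    calc ∑ j, β j * u j = ∑ i, β i * (M *ᵥ β) i := by rw [hMβ]
    _ = ∑ i, ∑ j, β i * (M i j * β j) := by
        simp [Matrix.mulVec, dotProduct, Finset.mul_sum]
    _ = ∑ i, ∑ j, (β i * β j * ⟪ρ i, ρ j⟫ + τ * (if i = j then β i * β j else 0)) := by
        refine Finset.sum_congr rfl fun i _ => Finset.sum_congr rfl fun j _ => ?_
        rw [hM i j]; by_cases h : i = j <;> simp [h] <;> ring
    _ = ∑ i, ∑ j, β i * β j * ⟪ρ i, ρ j⟫ + τ * ∑ j, (β j)^2 := by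
        have key : ∀ i : Fin t, ∑ j, (β i * β j * ⟪ρ i, ρ j⟫ + τ * (if i = j then β i * β j else 0))
            = (∑ j, β i * β j * ⟪ρ i, ρ j⟫) + τ * (β i)^2 := by
          intro i
          rw [Finset.sum_add_distrib]
          congr 1
          rw [← Finset.mul_sum]
          congr 1
          simp [sq]
        simp only [key, Finset.sum_add_distrib, ← Finset.mul_sum]
  have hvs : ⟪v, ∑ j, β j • ρ j⟫ = ∑ j, β j * u j := by
    rw [inner_sum]
    exact Finset.sum_congr rfl fun j _ => by rw [real_inner_smul_right, hu j]
  have hss : ⟪∑ i, β i • ρ i, ∑ j, β j • ρ j⟫ = ∑ i, ∑ j, β i * β j * ⟪ρ i, ρ j⟫ := by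
    rw [sum_inner]
    refine Finset.sum_congr rfl fun i _ => ?_
    rw [real_inner_smul_left, inner_sum, Finset.mul_sum]
    exact Finset.sum_congr rfl fun j _ => by rw [real_inner_smul_right]; ring
  have hnorm : ‖v - ∑ j, β j • ρ j‖ ^ 2
      = ⟪v,v⟫ - 2 * ∑ j, β j * u j + ∑ i, ∑ j, β i * β j * ⟪ρ i, ρ j⟫ := by
    have h1 := real_inner_comm (∑ j, β j • ρ j) v
    rw [← real_inner_self_eq_norm_sq, inner_sub_sub_self, hvs, ← h1, hvs, hss]
    ring
  have hub : u ⬝ᵥ β = ∑ j, β j * u j := by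
    simp [dotProduct, mul_comm]
  rw [hub, hnorm]
  linarith [hBu]

lemma nonneg_core {E : Type*} [NormedAddCommGroup E] [InnerProductSpace ℝ E]
    {t : ℕ} (ρ : Fin t → E) {τ : ℝ} (hτ : 0 ≤ τ)
    (M : Matrix (Fin t) (Fin t) ℝ)
    (hM : ∀ i j, M i j = ⟪ρ i, ρ j⟫ + τ * (if i = j then 1 else 0))
    (hMu : IsUnit M.det)
    (v : E) (u : Fin t → ℝ) (hu : ∀ j, u j = ⟪v, ρ j⟫) :
    0 ≤ ⟪v, v⟫ - u ⬝ᵥ (M⁻¹ *ᵥ u) := by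
  rw [core_id ρ τ M hM hMu v u hu]
  have h1 : (0:ℝ) ≤ ‖v - ∑ j, (M⁻¹ *ᵥ u) j • ρ j‖ ^ 2 := sq_nonneg _
  have h2 : (0:ℝ) ≤ ∑ j, ((M⁻¹ *ᵥ u) j) ^ 2 :=
    Finset.sum_nonneg fun j _ => sq_nonneg _
  nlinarith

lemma cs_core {E : Type*} [NormedAddCommGroup E] [InnerProductSpace ℝ E]
    {t : ℕ} (ρ : Fin t → E)
    (M : Matrix (Fin t) (Fin t) ℝ)
    (hM : ∀ i j, M i j = ⟪ρ i, ρ j⟫)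
    (hMu : IsUnit M.det)
    (w v : E) (u hv : Fin t → ℝ) (hu : ∀ j, u j = ⟪v, ρ j⟫)
    (hhv : ∀ j, hv j = ⟪w, ρ j⟫) :
    |⟪w, v⟫ - u ⬝ᵥ (M⁻¹ *ᵥ hv)| ≤ ‖w‖ * Real.sqrt (⟪v, v⟫ - u ⬝ᵥ (M⁻¹ *ᵥ u)) := by
  have hM' : ∀ i j, M i j = ⟪ρ i, ρ j⟫ + (0:ℝ) * (if i = j then 1 else 0) := by
    intro i j; simp [hM]
  have hMsymm : Mᵀ = M := by
    ext i j
    simp only [Matrix.transpose_apply, hM]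
    exact real_inner_comm _ _
  have hMinvsymm : (M⁻¹)ᵀ = M⁻¹ := by
    rw [Matrix.transpose_nonsing_inv, hMsymm]
  set β := M⁻¹ *ᵥ u with hβ
  have hdot : u ⬝ᵥ (M⁻¹ *ᵥ hv) = β ⬝ᵥ hv := by
    rw [Matrix.dotProduct_mulVec, ← Matrix.mulVec_transpose, hMinvsymm]
  have hβhv : β ⬝ᵥ hv = ⟪w, ∑ j, β j • ρ j⟫ := by
    rw [inner_sum]
    refine Finset.sum_congr rfl fun j _ => ?_
    rw [real_inner_smul_right, hhv j]
  have hid := core_id ρ 0 M hM' hMu v u hu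
  rw [zero_mul, add_zero] at hid
  have hinner : ⟪w, v⟫ - u ⬝ᵥ (M⁻¹ *ᵥ hv) = ⟪w, v - ∑ j, β j • ρ j⟫ := by
    rw [inner_sub_right, hdot, hβhv]
  rw [hinner]
  calc |⟪w, v - ∑ j, β j • ρ j⟫| ≤ ‖w‖ * ‖v - ∑ j, β j • ρ j‖ := abs_real_inner_le_norm _ _
  _ = ‖w‖ * Real.sqrt (⟪v, v⟫ - u ⬝ᵥ (M⁻¹ *ᵥ u)) := by
      rw [hid, Real.sqrt_sq (norm_nonneg _)]



lemma gram_quad (φ : X → H) {t : ℕ} (xs : Fin t → X) (x : Fin t → ℝ) :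
    x ⬝ᵥ (gram φ xs *ᵥ x) = ⟪∑ i, x i • φ (xs i), ∑ j, x j • φ (xs j)⟫ := by
  simp only [dotProduct, Matrix.mulVec, dotProduct, sum_inner, inner_sum,
    real_inner_smul_left, real_inner_smul_right, _root_.gram, ker, Matrix.of_apply, Finset.mul_sum]
  refine Finset.sum_congr rfl fun i _ => Finset.sum_congr rfl fun j _ => ?_
  rw [real_inner_comm (φ (xs j)) (φ (xs i))]
  ring

lemma Mapp (φ : X → H) {t : ℕ} (xs : Fin t → X) (σ : ℝ) (i j : Fin t) :
    (gram φ xs + σ ^ 2 • (1 : Matrix (Fin t) (Fin t) ℝ)) i j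
      = ⟪φ (xs i), φ (xs j)⟫ + σ ^ 2 * (if i = j then 1 else 0) := by
  simp [_root_.gram, ker, Matrix.one_apply]

lemma M_isUnit_det (φ : X → H) {t : ℕ} (xs : Fin t → X) {σ : ℝ} (hσ : 0 < σ) :
    IsUnit (gram φ xs + σ ^ 2 • (1 : Matrix (Fin t) (Fin t) ℝ)).det := by
  have hpd : (gram φ xs + σ ^ 2 • (1 : Matrix (Fin t) (Fin t) ℝ)).PosDef := by
    rw [Matrix.posDef_iff_dotProduct_mulVec]
    constructor
    · ext i j
      rw [Matrix.conjTranspose_apply, star_trivial, Mapp, Mapp,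
        real_inner_comm (φ (xs j)) (φ (xs i))]
      by_cases h : i = j <;> simp [h, Ne.symm]
    · intro x hx
      rw [star_trivial]
      have hq : x ⬝ᵥ ((gram φ xs + σ ^ 2 • (1 : Matrix (Fin t) (Fin t) ℝ)) *ᵥ x)
          = ⟪∑ i, x i • φ (xs i), ∑ j, x j • φ (xs j)⟫ + σ ^ 2 * ∑ i, x i * x i := by
        rw [Matrix.add_mulVec, dotProduct_add, gram_quad, smul_mulVec,
          Matrix.one_mulVec, dotProduct_smul]
        simp [dotProduct, smul_eq_mul]
      rw [hq]
      have h1 : (0:ℝ) ≤ ⟪∑ i, x i • φ (xs i), ∑ j, x j • φ (xs j)⟫ := real_inner_self_nonneg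
      have h2 : 0 < ∑ i, x i * x i := by
        obtain ⟨i, hi⟩ := Function.ne_iff.mp hx
        exact Finset.sum_pos' (fun j _ => mul_self_nonneg _)
          ⟨i, Finset.mem_univ i, mul_self_pos.mpr hi⟩
      have h3 := mul_pos (pow_pos hσ 2) h2
      linarith
  exact isUnit_iff_ne_zero.mpr hpd.det_pos.ne'


lemma dot_sum_left {t L : ℕ} (v : Fin L → Fin t → ℝ) (w : Fin t → ℝ) :
    (∑ i, v i) ⬝ᵥ w = ∑ i, v i ⬝ᵥ w := by
  simp only [dotProduct, Finset.sum_apply, Finset.sum_mul]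
  rw [Finset.sum_comm]

lemma dot_sum_right {t L : ℕ} (v : Fin t → ℝ) (w : Fin L → Fin t → ℝ) :
    v ⬝ᵥ (∑ j, w j) = ∑ j, v ⬝ᵥ w j := by
  simp only [dotProduct, Finset.sum_apply, Finset.mul_sum]
  rw [Finset.sum_comm]

lemma mulVec_sum' {t L : ℕ} (M' : Matrix (Fin t) (Fin t) ℝ) (w : Fin L → Fin t → ℝ) :
    M' *ᵥ (∑ j, w j) = ∑ j, M' *ᵥ w j := by
  ext k
  simp only [Matrix.mulVec, Finset.sum_apply]
  rw [← dot_sum_right]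

lemma sum_dot_mulVec_sum {t L : ℕ} (M' : Matrix (Fin t) (Fin t) ℝ)
    (v : Fin L → Fin t → ℝ) :
    (∑ i, v i) ⬝ᵥ (M' *ᵥ ∑ j, v j) = ∑ i, ∑ j, v i ⬝ᵥ (M' *ᵥ v j) := by
  rw [mulVec_sum', dot_sum_left]
  exact Finset.sum_congr rfl fun i _ => dot_sum_right _ _

lemma rvar_nonneg (φ : X → H) {t : ℕ} (xs : Fin t → X) {σ : ℝ} (hσ : 0 < σ) (a : X) :
    0 ≤ rvarFn σ φ xs a := by
  have h := nonneg_core (fun i => φ (xs i)) (sq_nonneg σ)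
    (gram φ xs + σ ^ 2 • 1) (Mapp φ xs σ) (M_isUnit_det φ xs hσ)
    (φ a) (kvec φ xs a) (fun j => rfl)
  simpa [rvarFn, ker] using h

lemma Qsum_nonneg (φ : X → H) {t L : ℕ} (xs : Fin t → X) {σ : ℝ} (hσ : 0 < σ)
    (XX : Fin L → X) :
    0 ≤ ∑ i, ∑ j, rcovMat σ φ xs XX i j := by
  have h := nonneg_core (fun i => φ (xs i)) (sq_nonneg σ)
    (gram φ xs + σ ^ 2 • 1) (Mapp φ xs σ) (M_isUnit_det φ xs hσ)
    (∑ i, φ (XX i)) (∑ i, kvec φ xs (XX i))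
    (fun j => by simp [Finset.sum_apply, kvec, ker, sum_inner])
  have e1 : (⟪∑ i, φ (XX i), ∑ i, φ (XX i)⟫ : ℝ) = ∑ i, ∑ j, ker φ (XX i) (XX j) := by
    rw [sum_inner]
    exact Finset.sum_congr rfl fun i _ => by rw [inner_sum]; rfl
  rw [e1, sum_dot_mulVec_sum] at h
  calc (0:ℝ) ≤ ∑ i, ∑ j, ker φ (XX i) (XX j)
      - ∑ i, ∑ j, kvec φ xs (XX i) ⬝ᵥ ((gram φ xs + σ ^ 2 • 1)⁻¹ *ᵥ kvec φ xs (XX j)) := h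
  _ = ∑ i, ∑ j, rcovMat σ φ xs XX i j := by
      rw [← Finset.sum_sub_distrib]
      refine Finset.sum_congr rfl fun i _ => ?_
      rw [← Finset.sum_sub_distrib]
      rfl


lemma gram_psi [DecidableEq X] (φ : X → H) (ψ : X → H') {σ : ℝ}
    (hker : ∀ a b : X, (⟪ψ a, ψ b⟫ : ℝ) = ⟪φ a, φ b⟫ + σ ^ 2 * (if a = b then 1 else 0))
    {t : ℕ} (xs : Fin t → X) (hinj : Function.Injective xs) (i j : Fin t) :
    (gram φ xs + σ ^ 2 • (1 : Matrix (Fin t) (Fin t) ℝ)) i j = ⟪ψ (xs i), ψ (xs j)⟫ := by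
  rw [Mapp, hker]
  simp [hinj.eq_iff]

lemma pred_err_single [DecidableEq X] (φ : X → H) (ψ : X → H') {σ : ℝ} (hσ : 0 < σ)
    (hker : ∀ a b : X, (⟪ψ a, ψ b⟫ : ℝ) = ⟪φ a, φ b⟫ + σ ^ 2 * (if a = b then 1 else 0))
    (wh : H') (hfun : X → ℝ) (hh : ∀ a, hfun a = ⟪wh, ψ a⟫)
    {t : ℕ} (xs : Fin t → X) (hinj : Function.Injective xs)
    (a : X) (ha : ∀ j, a ≠ xs j) :
    |hfun a - rmeanFn σ φ hfun xs a| ≤ ‖wh‖ * Real.sqrt (rvarFn σ φ xs a + σ ^ 2) := by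
  have hcs := cs_core (fun i => ψ (xs i)) (gram φ xs + σ ^ 2 • 1)
    (gram_psi φ ψ hker xs hinj) (M_isUnit_det φ xs hσ)
    wh (ψ a) (kvec φ xs a) (fun i => hfun (xs i))
    (fun j => by simp [kvec, ker, hker, ha j]) (fun j => hh (xs j))
  rw [hker a a, if_pos rfl, mul_one] at hcs
  have harg : (⟪φ a, φ a⟫ : ℝ) + σ ^ 2
      - kvec φ xs a ⬝ᵥ ((gram φ xs + σ ^ 2 • 1)⁻¹ *ᵥ kvec φ xs a)
      = rvarFn σ φ xs a + σ ^ 2 := by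
    simp [rvarFn, ker]; ring
  rw [harg, ← hh a] at hcs
  exact hcs

lemma pred_err_batch [DecidableEq X] (φ : X → H) (ψ : X → H') {σ : ℝ} (hσ : 0 < σ)
    (hker : ∀ a b : X, (⟪ψ a, ψ b⟫ : ℝ) = ⟪φ a, φ b⟫ + σ ^ 2 * (if a = b then 1 else 0))
    (wh : H') (hfun : X → ℝ) (hh : ∀ a, hfun a = ⟪wh, ψ a⟫)
    {t L : ℕ} (xs : Fin t → X) (hinj : Function.Injective xs)
    (XX : Fin L → X) (hnew : ∀ i j, XX i ≠ xs j) :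
    |(∑ i, hfun (XX i)) - ∑ i, rmeanFn σ φ hfun xs (XX i)|
      ≤ ‖wh‖ * Real.sqrt ((∑ i, ∑ j, rcovMat σ φ xs XX i j)
          + σ ^ 2 * ∑ i, ∑ j, (if XX i = XX j then (1:ℝ) else 0)) := by
  have hcs := cs_core (fun i => ψ (xs i)) (gram φ xs + σ ^ 2 • 1)
    (gram_psi φ ψ hker xs hinj) (M_isUnit_det φ xs hσ)
    wh (∑ i, ψ (XX i)) (∑ i, kvec φ xs (XX i)) (fun i => hfun (xs i))
    (fun j => by
      simp only [Finset.sum_apply, sum_inner]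
      exact Finset.sum_congr rfl fun i _ => by simp [kvec, ker, hker, hnew i j])
    (fun j => hh (xs j))
  have e0 : (⟪wh, ∑ i, ψ (XX i)⟫ : ℝ) = ∑ i, hfun (XX i) := by
    rw [inner_sum]
    exact Finset.sum_congr rfl fun i _ => (hh (XX i)).symm
  have e1 : (⟪∑ i, ψ (XX i), ∑ i, ψ (XX i)⟫ : ℝ)
      = (∑ i, ∑ j, ker φ (XX i) (XX j))
        + σ ^ 2 * ∑ i, ∑ j, (if XX i = XX j then (1:ℝ) else 0) := by
    rw [sum_inner]
    rw [Finset.mul_sum, ← Finset.sum_add_distrib]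
    refine Finset.sum_congr rfl fun i _ => ?_
    rw [inner_sum, Finset.mul_sum, ← Finset.sum_add_distrib]
    exact Finset.sum_congr rfl fun j _ => by rw [hker]; rfl
  have e2 : (∑ i, kvec φ xs (XX i)) ⬝ᵥ ((gram φ xs + σ ^ 2 • 1)⁻¹ *ᵥ (fun i => hfun (xs i)))
      = ∑ i, rmeanFn σ φ hfun xs (XX i) := by
    rw [dot_sum_left]
    rfl
  have e3 : (∑ i, kvec φ xs (XX i)) ⬝ᵥ ((gram φ xs + σ ^ 2 • 1)⁻¹ *ᵥ ∑ i, kvec φ xs (XX i))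
      = ∑ i, ∑ j, kvec φ xs (XX i) ⬝ᵥ ((gram φ xs + σ ^ 2 • 1)⁻¹ *ᵥ kvec φ xs (XX j)) :=
    sum_dot_mulVec_sum _ _
  rw [e0, e1, e2, e3] at hcs
  have e4 : (∑ i, ∑ j, ker φ (XX i) (XX j))
        + σ ^ 2 * (∑ i, ∑ j, (if XX i = XX j then (1:ℝ) else 0))
      - ∑ i, ∑ j, kvec φ xs (XX i) ⬝ᵥ ((gram φ xs + σ ^ 2 • 1)⁻¹ *ᵥ kvec φ xs (XX j))
      = (∑ i, ∑ j, rcovMat σ φ xs XX i j)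
          + σ ^ 2 * ∑ i, ∑ j, (if XX i = XX j then (1:ℝ) else 0) := by
    have : ∑ i, ∑ j, rcovMat σ φ xs XX i j
        = (∑ i, ∑ j, ker φ (XX i) (XX j))
          - ∑ i, ∑ j, kvec φ xs (XX i) ⬝ᵥ ((gram φ xs + σ ^ 2 • 1)⁻¹ *ᵥ kvec φ xs (XX j)) := by
      rw [← Finset.sum_sub_distrib]
      refine Finset.sum_congr rfl fun i _ => ?_
      rw [← Finset.sum_sub_distrib]
      rfl
    rw [this]; ring
  rw [e4] at hcs
  exact hcs

/-- Lemma 12 (perturbation setting, batch per-step regret bound). -/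
theorem statement_18 [DecidableEq X]
    (φ : X → H) (ψ : X → H')
    (σ : ℝ) (hσ : 0 < σ)
    (hker : ∀ a b : X, (⟪ψ a, ψ b⟫ : ℝ) = ⟪φ a, φ b⟫ + σ ^ 2 * (if a = b then 1 else 0))
    (wh : H') (hfun : X → ℝ) (hh : ∀ a, hfun a = ⟪wh, ψ a⟫)
    (g : X → ℝ) (G : ℝ) (hG : 0 ≤ G) (hg : ∀ a : X, |g a| ≤ G * σ)
    (f : X → ℝ) (hfdef : ∀ a, f a = hfun a - g a)
    (xstar : X) (hstar : ∀ a : X, f a ≤ f xstar)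
    (n L : ℕ) (hL : 0 < L)
    (xs : Fin ((n - 1) * L) → X) (hinj : Function.Injective xs)
    (Xn : Fin L → X)
    (hacq : ∀ XX : Fin L → X,
      rbatchAcq σ φ hfun ‖wh‖ xs XX ≤ rbatchAcq σ φ hfun ‖wh‖ xs Xn)
    (hstar_new : ∀ j, xstar ≠ xs j)
    (hXn_new : ∀ (i : Fin L) (j), Xn i ≠ xs j) :
    (1 / (L : ℝ)) * ∑ i, (f xstar - f (Xn i)) ≤
      2 * ‖wh‖ * Real.sqrt ((rcovMat σ φ xs Xn).trace / (L : ℝ)) +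
        2 * (‖wh‖ + G) * σ := by
  have hLpos : (0:ℝ) < L := by exact_mod_cast hL
  have hLne : (L:ℝ) ≠ 0 := hLpos.ne'
  have hw : (0:ℝ) ≤ ‖wh‖ := norm_nonneg _
  set m := rmeanFn σ φ hfun xs with hm
  -- abbreviations
  set A := Real.sqrt ((rcovMat σ φ xs Xn).trace / (L : ℝ)) with hA
  set Qs := ∑ i, ∑ j, rcovMat σ φ xs Xn i j with hQs
  have hQs0 : 0 ≤ Qs := Qsum_nonneg φ xs hσ Xn
  set Qr := Real.sqrt (Qs / (L:ℝ)^2) with hQr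
  have hr0 : 0 ≤ rvarFn σ φ xs xstar := rvar_nonneg φ xs hσ xstar
  -- sqrt splitting helper
  have sqrt_add : ∀ a b : ℝ, 0 ≤ a → 0 ≤ b →
      Real.sqrt (a + b ^ 2) ≤ Real.sqrt a + b := by
    intro a b ha hb
    have h1 : Real.sqrt a + b = Real.sqrt ((Real.sqrt a + b) ^ 2) :=
      (Real.sqrt_sq (by positivity)).symm
    rw [h1]
    apply Real.sqrt_le_sqrt
    have h2 := Real.sq_sqrt ha
    nlinarith [Real.sqrt_nonneg a]
  -- Step 1: constant-batch acquisition value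
  have hconst_eq : rbatchAcq σ φ hfun ‖wh‖ xs (fun _ : Fin L => xstar)
      = m xstar + ‖wh‖ * Real.sqrt (rvarFn σ φ xs xstar) := by
    have hc : ∀ i j : Fin L, rcovMat σ φ xs (fun _ => xstar) i j = rvarFn σ φ xs xstar :=
      fun i j => rfl
    unfold rbatchAcq
    simp only [Matrix.trace, Matrix.diag, hc, Finset.sum_const, Finset.card_univ,
      Fintype.card_fin, nsmul_eq_mul]
    have e1 : ((L:ℝ) * rvarFn σ φ xs xstar) / L = rvarFn σ φ xs xstar :=
      mul_div_cancel_left₀ _ hLne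
    have e2 : ((L:ℝ) * ((L:ℝ) * rvarFn σ φ xs xstar)) / (L:ℝ)^2 = rvarFn σ φ xs xstar := by
      field_simp
    rw [e1, e2]
    have e3 : 1/(L:ℝ) * ((L:ℝ) * rmeanFn σ φ hfun xs xstar) = rmeanFn σ φ hfun xs xstar := by
      field_simp
    rw [e3]
    ring
  have hF1 : m xstar + ‖wh‖ * Real.sqrt (rvarFn σ φ xs xstar)
      ≤ (1 / (L : ℝ)) * ∑ i, m (Xn i) + ‖wh‖ * (2 * A - Qr) := by
    have h := hacq (fun _ : Fin L => xstar)
    rw [hconst_eq] at h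
    unfold rbatchAcq at h
    exact h
  -- Step 2: single-point error
  have hF2 : hfun xstar - m xstar ≤ ‖wh‖ * (Real.sqrt (rvarFn σ φ xs xstar) + σ) := by
    have h := pred_err_single φ ψ hσ hker wh hfun hh xs hinj xstar hstar_new
    have h2 := sqrt_add (rvarFn σ φ xs xstar) σ hr0 hσ.le
    have h3 := abs_le.mp h
    nlinarith [Real.sqrt_nonneg (rvarFn σ φ xs xstar + σ ^ 2)]
  -- Step 3: batch error
  have hF3 : (1 / (L : ℝ)) * ∑ i, m (Xn i) - (1 / (L : ℝ)) * ∑ i, hfun (Xn i)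
      ≤ ‖wh‖ * (Qr + σ) := by
    have h := pred_err_batch φ ψ hσ hker wh hfun hh xs hinj Xn hXn_new
    have hsδ : (∑ i, ∑ j, if Xn i = Xn j then (1:ℝ) else 0) ≤ (L:ℝ)^2 := by
      calc (∑ i, ∑ j, if Xn i = Xn j then (1:ℝ) else 0)
          ≤ ∑ _i : Fin L, ∑ _j : Fin L, (1:ℝ) :=
            Finset.sum_le_sum fun i _ => Finset.sum_le_sum fun j _ => by
              split <;> norm_num
      _ = (L:ℝ)^2 := by simp [sq]
    have hmono : Real.sqrt (Qs + σ ^ 2 * ∑ i, ∑ j, if Xn i = Xn j then (1:ℝ) else 0)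
        ≤ Real.sqrt Qs + σ * L := by
      have h1 : Qs + σ ^ 2 * (∑ i, ∑ j, if Xn i = Xn j then (1:ℝ) else 0)
          ≤ Qs + (σ * L) ^ 2 := by
        have := mul_le_mul_of_nonneg_left hsδ (sq_nonneg σ)
        nlinarith
      calc Real.sqrt (Qs + σ ^ 2 * ∑ i, ∑ j, if Xn i = Xn j then (1:ℝ) else 0)
          ≤ Real.sqrt (Qs + (σ * L) ^ 2) := Real.sqrt_le_sqrt h1
      _ ≤ Real.sqrt Qs + σ * L := sqrt_add Qs (σ * L) hQs0 (by positivity)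
    have hQrL : Qr = Real.sqrt Qs / L := by
      rw [hQr, Real.sqrt_div hQs0, Real.sqrt_sq hLpos.le]
    have h3 := abs_le.mp h
    have h4 : (∑ i, m (Xn i)) - (∑ i, hfun (Xn i)) ≤ ‖wh‖ * (Real.sqrt Qs + σ * L) := by
      have := mul_le_mul_of_nonneg_left hmono hw
      nlinarith [Real.sqrt_nonneg (Qs + σ ^ 2 * ∑ i, ∑ j, if Xn i = Xn j then (1:ℝ) else 0)]
    have h5 := mul_le_mul_of_nonneg_left h4 (le_of_lt (by positivity : (0:ℝ) < 1/(L:ℝ)))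
    calc (1/(L:ℝ)) * ∑ i, m (Xn i) - (1/(L:ℝ)) * ∑ i, hfun (Xn i)
        = (1/(L:ℝ)) * ((∑ i, m (Xn i)) - ∑ i, hfun (Xn i)) := by ring
    _ ≤ (1/(L:ℝ)) * (‖wh‖ * (Real.sqrt Qs + σ * L)) := h5
    _ = ‖wh‖ * (Real.sqrt Qs / L + σ) := by field_simp
    _ = ‖wh‖ * (Qr + σ) := by rw [hQrL]
  -- Step 4: assemble
  have hsum1 : ∑ i, (f xstar - f (Xn i))
      = (L:ℝ) * hfun xstar - (∑ i, hfun (Xn i)) + ∑ i, (g (Xn i) - g xstar) := by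
    have e : ∀ i : Fin L, f xstar - f (Xn i)
        = hfun xstar - hfun (Xn i) + (g (Xn i) - g xstar) := by
      intro i; rw [hfdef, hfdef]; ring
    rw [Finset.sum_congr rfl (fun i _ => e i), Finset.sum_add_distrib,
      Finset.sum_sub_distrib]
    simp [Finset.sum_const, Finset.card_univ, mul_comm]
  have hsum2 : (1/(L:ℝ)) * ∑ i, (f xstar - f (Xn i))
      = hfun xstar - (1/(L:ℝ)) * ∑ i, hfun (Xn i)
        + (1/(L:ℝ)) * ∑ i, (g (Xn i) - g xstar) := by
    rw [hsum1]; field_simp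
  have hgsum : ∑ i, (g (Xn i) - g xstar) ≤ (L:ℝ) * (2 * (G * σ)) := by
    calc ∑ i, (g (Xn i) - g xstar) ≤ ∑ _i : Fin L, 2*(G*σ) :=
          Finset.sum_le_sum fun i _ => by
            have h1 := abs_le.mp (hg (Xn i)); have h2 := abs_le.mp (hg xstar)
            linarith [h1.1, h1.2, h2.1, h2.2]
    _ = (L:ℝ) * (2*(G*σ)) := by simp [mul_comm]
  have hg2 : (1/(L:ℝ)) * ∑ i, (g (Xn i) - g xstar) ≤ 2*(G*σ) := by
    have h6 := mul_le_mul_of_nonneg_left hgsum (le_of_lt (by positivity : (0:ℝ) < 1/(L:ℝ)))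
    calc (1/(L:ℝ)) * ∑ i, (g (Xn i) - g xstar)
        ≤ (1/(L:ℝ)) * ((L:ℝ) * (2*(G*σ))) := h6
    _ = 2*(G*σ) := by field_simp
  rw [hsum2]
  linarith [hF1, hF2, hF3, hg2]
end
end
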